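/- arXiv:2205.01566 — 12 statements merged into one kernel-verified Lean document; each statement's English description precedes it below -/
import Mathlib

section
/- Let α be Levin's normal number in base 2. For every integer m ≥ 1 and every real γ with 0 ≤ γ < 1 one has |#{n_m ≤ n < n_m + 2^m·2^{2^m} : {2^n·α} ∈ [0, γ)} − γ·2^m·2^{2^m}| < 5·2^m. -/
open scoped Classical

/-- `n_m = ∑_{i=1}^{m-1} 2^i · 2^{2^i}` (so `n_1 = 0`). -/
def levinN (m : ℕ) : ℕ := ∑ i ∈ Finset.Ico 1 m, 2 ^ i * 2 ^ (2 ^ i)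

/-- The digit `d_k(n)` in block `A_m` of Levin's normal number. -/
def levinD (m k n : ℕ) : ℕ :=
  (∑ j ∈ Finset.range (2 ^ m), (Nat.choose (k + j) j % 2) * (n / 2 ^ j % 2)) % 2

/-- Levin's normal number `α` in base 2. -/
noncomputable def levinAlpha : ℝ :=
  ∑' m : ℕ, ∑ n ∈ Finset.range (2 ^ 2 ^ (m + 1)), ∑ k ∈ Finset.range (2 ^ (m + 1)),
    (levinD (m + 1) k n : ℝ) / 2 ^ (levinN (m + 1) + 2 ^ (m + 1) * n + k + 1)

/-- Lucas' theorem consequence: `C(k+j, j)` is odd iff `j &&& k = 0`. -/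
theorem lucas_two : ∀ s k j : ℕ, k + j ≤ s →
    Nat.choose (k + j) j % 2 = if j &&& k = 0 then 1 else 0 := by
  intro s
  induction s with
  | zero =>
    intro k j h
    have hk : k = 0 := by omega
    have hj : j = 0 := by omega
    subst hk; subst hj; simp
  | succ s ih =>
    intro k j h
    rcases Nat.eq_zero_or_pos (k + j) with h0 | hpos
    · have hk : k = 0 := by omega
      have hj : j = 0 := by omega
      subst hk; subst hj; simp
    have hmod := @Choose.choose_modEq_choose_mod_mul_choose_div_nat (k + j) j 2 ⟨Nat.prime_two⟩
    have hmod' : Nat.choose (k + j) j % 2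
        = (Nat.choose ((k + j) % 2) (j % 2) * Nat.choose ((k + j) / 2) (j / 2)) % 2 := hmod
    have hk2 := Nat.div_add_mod k 2
    have hj2 := Nat.div_add_mod j 2
    have hkm : k % 2 < 2 := Nat.mod_lt _ (by norm_num)
    have hjm : j % 2 < 2 := Nat.mod_lt _ (by norm_num)
    by_cases hc : k % 2 = 1 ∧ j % 2 = 1
    · -- carry case : both low bits 1
      have h1 : (k + j) % 2 = 0 := by omega
      have h2 : Nat.choose ((k + j) % 2) (j % 2) = 0 := by
        rw [h1, hc.2]; simp
      have hlhs : Nat.choose (k + j) j % 2 = 0 := by rw [hmod', h2]; simp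
      have hne : j &&& k ≠ 0 := by
        intro hz
        have : (j &&& k).testBit 0 = false := by rw [hz]; exact Nat.zero_testBit 0
        rw [Nat.testBit_land, Nat.testBit_zero, Nat.testBit_zero] at this
        simp [hc.1, hc.2] at this
      rw [hlhs, if_neg hne]
    · -- no carry in the low bit
      have hlow : k % 2 = 0 ∨ j % 2 = 0 := by omega
      have h1 : (k + j) % 2 = k % 2 + j % 2 := by omega
      have h2 : Nat.choose ((k + j) % 2) (j % 2) = 1 := by
        rw [h1]
        rcases hlow with h | h <;> rw [h] <;>
          rcases (by omega : k % 2 = 0 ∨ k % 2 = 1) with h' | h' <;>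
          rcases (by omega : j % 2 = 0 ∨ j % 2 = 1) with h'' | h'' <;>
          simp_all [Nat.choose]
      have h3 : (k + j) / 2 = k / 2 + j / 2 := by omega
      have hrec : k / 2 + j / 2 ≤ s := by omega
      have ihv := ih (k / 2) (j / 2) hrec
      have hsplit : j &&& k = 0 ↔ (j % 2 = 0 ∨ k % 2 = 0) ∧ j / 2 &&& k / 2 = 0 := by
        constructor
        · intro hz
          constructor
          · have h0 : (j &&& k).testBit 0 = false := by rw [hz]; exact Nat.zero_testBit 0
            rw [Nat.testBit_land, Nat.testBit_zero, Nat.testBit_zero] at h0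
            rcases Bool.and_eq_false_iff.mp h0 with h | h <;> simp at h <;> omega
          · apply Nat.eq_of_testBit_eq
            intro i
            have h0 : (j &&& k).testBit (i + 1) = false := by rw [hz]; exact Nat.zero_testBit _
            rw [Nat.testBit_land, Nat.testBit_add_one, Nat.testBit_add_one] at h0
            rw [Nat.testBit_land, Nat.zero_testBit, h0]
        · rintro ⟨hz0, hz⟩
          apply Nat.eq_of_testBit_eq
          intro i
          rw [Nat.testBit_land, Nat.zero_testBit]
          cases i with
          | zero =>
            rw [Nat.testBit_zero, Nat.testBit_zero]
            rcases hz0 with h | h <;> simp [h]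
          | succ i =>
            rw [Nat.testBit_add_one, Nat.testBit_add_one]
            have := congrArg (fun x => x.testBit i) hz
            simpa [Nat.testBit_land, Nat.zero_testBit] using this
      rw [hmod', h2, h3, one_mul, ihv]
      by_cases hz : j / 2 &&& k / 2 = 0
      · rw [if_pos hz, if_pos (hsplit.mpr ⟨by omega, hz⟩)]
      · rw [if_neg hz, if_neg (fun hc' => hz (hsplit.mp hc').2)]

/-- Bits of `2^m - 1 - k` are the complemented bits of `k` (within `m` bits). -/
theorem testBit_compl : ∀ i m k : ℕ, k < 2 ^ m →
    (2 ^ m - 1 - k).testBit i = (decide (i < m) && !(k.testBit i)) := by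
  intro i
  induction i with
  | zero =>
    intro m k hk
    cases m with
    | zero =>
      have : k = 0 := by omega
      subst this; simp
    | succ m =>
      have h2 : 0 < 2 ^ (m + 1) := Nat.pow_pos (by norm_num)
      rw [Nat.testBit_zero, Nat.testBit_zero]
      have hmod : (2 ^ (m + 1) - 1 - k) % 2 = 1 - k % 2 := by
        have h1 : 2 ^ (m + 1) = 2 * 2 ^ m := by ring
        omega
      simp only [hmod]
      have : k % 2 < 2 := Nat.mod_lt _ (by norm_num)
      rcases (by omega : k % 2 = 0 ∨ k % 2 = 1) with h | h <;> simp [h]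
  | succ i ih =>
    intro m k hk
    cases m with
    | zero =>
      have : k = 0 := by omega
      subst this; simp
    | succ m =>
      rw [Nat.testBit_add_one, Nat.testBit_add_one]
      have hdiv : (2 ^ (m + 1) - 1 - k) / 2 = 2 ^ m - 1 - k / 2 := by
        have h1 : 2 ^ (m + 1) = 2 * 2 ^ m := by ring
        omega
      have hk2 : k / 2 < 2 ^ m := by
        have h1 : 2 ^ (m + 1) = 2 * 2 ^ m := by ring
        omega
      rw [hdiv, ih m (k / 2) hk2]
      have : decide (i < m) = decide (i + 1 < m + 1) := by simp
      rw [this]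

/-- `j &&& k = 0 ↔ j` is a "submask" of the complement of `k`. -/
theorem land_compl_iff (m k j : ℕ) (hk : k < 2 ^ m) (hj : j < 2 ^ m) :
    (j &&& k = 0) ↔ (j &&& (2 ^ m - 1 - k) = j) := by
  constructor
  · intro hz
    apply Nat.eq_of_testBit_eq
    intro i
    rw [Nat.testBit_land, testBit_compl i m k hk]
    by_cases him : i < m
    · have h0 : (j &&& k).testBit i = false := by rw [hz]; exact Nat.zero_testBit i
      rw [Nat.testBit_land] at h0
      rcases Bool.and_eq_false_iff.mp h0 with h | h
      · simp [h]
      · simp [him, h]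
    · have : j.testBit i = false := Nat.testBit_eq_false_of_lt (lt_of_lt_of_le hj
        (Nat.pow_le_pow_right (by norm_num) (by omega)))
      simp [this]
  · intro hsub
    apply Nat.eq_of_testBit_eq
    intro i
    rw [Nat.testBit_land, Nat.zero_testBit]
    have := congrArg (fun x => x.testBit i) hsub
    simp only [Nat.testBit_land, testBit_compl i m k hk] at this
    by_cases hjb : j.testBit i
    · rw [hjb] at this ⊢
      simp only [Bool.true_and] at this ⊢
      cases hkb : k.testBit i
      · simp
      · rw [hkb] at this; simp at this
    · simp [hjb]

/-- The subset-parity form of `levinD`. -/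
def levinF (m c n : ℕ) : ℕ :=
  (∑ j ∈ (Finset.range (2 ^ m)).filter (fun j => j &&& c = j), n / 2 ^ j % 2) % 2

theorem levinD_eq_F (m k n : ℕ) (hk : k < 2 ^ m) :
    levinD m k n = levinF m (2 ^ m - 1 - k) n := by
  unfold levinD levinF
  congr 1
  rw [Finset.sum_filter]
  apply Finset.sum_congr rfl
  intro j hj
  rw [Finset.mem_range] at hj
  rw [lucas_two (k + j) k j le_rfl]
  by_cases hz : j &&& k = 0
  · rw [if_pos hz, if_pos ((land_compl_iff m k j hk hj).mp hz), one_mul]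
  · rw [if_neg hz, if_neg (fun hc => hz ((land_compl_iff m k j hk hj).mpr hc)), zero_mul]

theorem levinF_split (m c n : ℕ) (hc : c < 2 ^ m) :
    levinF m c n = (n / 2 ^ c % 2 +
      ∑ j ∈ (Finset.range (2 ^ m)).filter (fun j => j &&& c = j ∧ j < c), n / 2 ^ j % 2) % 2 := by
  unfold levinF
  congr 1
  have hmem : c ∈ (Finset.range (2 ^ m)).filter (fun j => j &&& c = j) := by
    simp [Finset.mem_filter, Finset.mem_range, hc, Nat.and_self]
  rw [← Finset.add_sum_erase _ _ hmem]
  congr 1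
  apply Finset.sum_congr _ (fun _ _ => rfl)
  ext j
  simp only [Finset.mem_erase, Finset.mem_filter, Finset.mem_range]
  constructor
  · rintro ⟨hne, hjr, hsub⟩
    refine ⟨hjr, hsub, ?_⟩
    have : j ≤ c := by calc j = j &&& c := hsub.symm
                          _ ≤ c := Nat.and_le_right
    omega
  · rintro ⟨hjr, hsub, hlt⟩
    exact ⟨by omega, hjr, hsub⟩

/-- Recovery of low bits from the values `levinF m c n` for `c ≤ r`. -/
theorem recover_low (m r n₁ n₂ : ℕ) (hr : r < 2 ^ m)
    (h : ∀ c ≤ r, levinF m c n₁ = levinF m c n₂) :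
    ∀ i ≤ r, n₁ / 2 ^ i % 2 = n₂ / 2 ^ i % 2 := by
  intro i
  induction i using Nat.strong_induction_on with
  | _ i ih =>
    intro hir
    have hi : i < 2 ^ m := by omega
    have heq := h i hir
    rw [levinF_split m i n₁ hi, levinF_split m i n₂ hi] at heq
    have hsum : ∑ j ∈ (Finset.range (2 ^ m)).filter (fun j => j &&& i = j ∧ j < i), n₁ / 2 ^ j % 2
        = ∑ j ∈ (Finset.range (2 ^ m)).filter (fun j => j &&& i = j ∧ j < i), n₂ / 2 ^ j % 2 := by
      apply Finset.sum_congr rfl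
      intro j hj
      simp only [Finset.mem_filter] at hj
      exact ih j hj.2.2 (by omega)
    rw [hsum] at heq
    have h1 : n₁ / 2 ^ i % 2 < 2 := Nat.mod_lt _ (by norm_num)
    have h2 : n₂ / 2 ^ i % 2 < 2 := Nat.mod_lt _ (by norm_num)
    omega

/-- Full recovery: low bits known up to `r`, `levinF` values known above `r`. -/
theorem recover_high (m r n₁ n₂ : ℕ) (hr : r < 2 ^ m)
    (hn₁ : n₁ < 2 ^ 2 ^ m) (hn₂ : n₂ < 2 ^ 2 ^ m)
    (hlow : ∀ i ≤ r, n₁ / 2 ^ i % 2 = n₂ / 2 ^ i % 2)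
    (hhigh : ∀ c, r < c → c < 2 ^ m → levinF m c n₁ = levinF m c n₂) :
    n₁ = n₂ := by
  have hbits : ∀ i < 2 ^ m, n₁ / 2 ^ i % 2 = n₂ / 2 ^ i % 2 := by
    intro i
    induction i using Nat.strong_induction_on with
    | _ i ih =>
      intro hi
      by_cases hir : i ≤ r
      · exact hlow i hir
      · have heq := hhigh i (by omega) hi
        rw [levinF_split m i n₁ hi, levinF_split m i n₂ hi] at heq
        have hsum : ∑ j ∈ (Finset.range (2 ^ m)).filter (fun j => j &&& i = j ∧ j < i),
              n₁ / 2 ^ j % 2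
            = ∑ j ∈ (Finset.range (2 ^ m)).filter (fun j => j &&& i = j ∧ j < i),
              n₂ / 2 ^ j % 2 := by
          apply Finset.sum_congr rfl
          intro j hj
          simp only [Finset.mem_filter, Finset.mem_range] at hj
          exact ih j hj.2.2 hj.1
        rw [hsum] at heq
        have h1 : n₁ / 2 ^ i % 2 < 2 := Nat.mod_lt _ (by norm_num)
        have h2 : n₂ / 2 ^ i % 2 < 2 := Nat.mod_lt _ (by norm_num)
        omega
  apply Nat.eq_of_testBit_eq
  intro i
  by_cases hi : i < 2 ^ m
  · have := hbits i hi
    rw [Nat.testBit_eq_decide_div_mod_eq, Nat.testBit_eq_decide_div_mod_eq, this]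
  · rw [Nat.testBit_eq_false_of_lt (lt_of_lt_of_le hn₁
        (Nat.pow_le_pow_right (by norm_num) (by omega))),
      Nat.testBit_eq_false_of_lt (lt_of_lt_of_le hn₂
        (Nat.pow_le_pow_right (by norm_num) (by omega)))]

theorem levinD_le_one (m k n : ℕ) : levinD m k n ≤ 1 :=
  Nat.lt_succ_iff.mp (Nat.mod_lt _ (by norm_num))

theorem levinD_zero (m k : ℕ) : levinD m k 0 = 0 := by
  unfold levinD
  have : ∀ j ∈ Finset.range (2 ^ m), (Nat.choose (k + j) j % 2) * (0 / 2 ^ j % 2) = 0 := by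
    intro j _
    simp
  rw [Finset.sum_congr rfl this]
  simp

/-- The window function: the integer whose binary digits (most significant first) are the
`2^m` digits of the block-`m` digit stream starting at in-word position `k` of word `n`. -/
def levinPhi (m k n : ℕ) : ℕ :=
  ∑ j ∈ Finset.range (2 ^ m),
    levinD m ((k + j) % 2 ^ m) ((n + (k + j) / 2 ^ m) % 2 ^ 2 ^ m) * 2 ^ (2 ^ m - 1 - j)

theorem sum_bits_div (L : ℕ) (d : ℕ → ℕ) (hd : ∀ j, d j ≤ 1) :
    ∀ i < L, (∑ j ∈ Finset.range L, d j * 2 ^ j) / 2 ^ i % 2 = d i := by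
  induction L generalizing d with
  | zero => intro i hi; omega
  | succ L ih =>
    intro i hi
    rw [Finset.sum_range_succ']
    have hS : ∀ x : ℕ, (∑ j ∈ Finset.range L, d (j + 1) * 2 ^ (j + 1)) + x
        = 2 * (∑ j ∈ Finset.range L, d (j + 1) * 2 ^ j) + x := by
      intro x
      congr 1
      rw [Finset.mul_sum]
      apply Finset.sum_congr rfl
      intro j _
      ring
    rw [hS]
    cases i with
    | zero =>
      simp only [pow_zero, Nat.div_one]
      have := hd 0
      omega
    | succ i =>
      have h1 : (2 * (∑ j ∈ Finset.range L, d (j + 1) * 2 ^ j) + d 0 * 2 ^ 0) / 2 ^ (i + 1)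
          = (∑ j ∈ Finset.range L, d (j + 1) * 2 ^ j) / 2 ^ i := by
        rw [pow_succ, mul_comm (2 ^ i) 2, ← Nat.div_div_eq_div_mul]
        congr 1
        have := hd 0
        omega
      rw [h1]
      exact ih (fun j => d (j + 1)) (fun j => hd (j + 1)) i (by omega)

theorem levinPhi_bits (m k n : ℕ) :
    ∀ j < 2 ^ m, levinPhi m k n / 2 ^ (2 ^ m - 1 - j) % 2
      = levinD m ((k + j) % 2 ^ m) ((n + (k + j) / 2 ^ m) % 2 ^ 2 ^ m) := by
  intro j hj
  set M := 2 ^ m with hM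
  set d : ℕ → ℕ := fun i => levinD m ((k + (M - 1 - i)) % M) ((n + (k + (M - 1 - i)) / M) % 2 ^ M)
    with hd
  have hrefl : levinPhi m k n = ∑ i ∈ Finset.range M, d i * 2 ^ i := by
    unfold levinPhi
    rw [← Finset.sum_range_reflect]
    apply Finset.sum_congr rfl
    intro i hi
    rw [Finset.mem_range] at hi
    simp only [hd]
    congr 2 <;> omega
  rw [hrefl]
  have := sum_bits_div M d (fun i => levinD_le_one _ _ _) (M - 1 - j) (by omega)
  rw [this]
  simp only [hd]
  have e : M - 1 - (M - 1 - j) = j := by omega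
  rw [e]

theorem bit_as_mod (a i : ℕ) : a / 2 ^ i % 2 = a % 2 ^ (i + 1) / 2 ^ i := by
  rw [pow_succ, Nat.mod_mul_right_div_self]

theorem bit_eq_of_mod_eq {a b t : ℕ} (h : a % 2 ^ t = b % 2 ^ t) {i : ℕ} (hi : i < t) :
    a / 2 ^ i % 2 = b / 2 ^ i % 2 := by
  rw [bit_as_mod, bit_as_mod, ← Nat.mod_mod_of_dvd a (pow_dvd_pow 2 (by omega : i + 1 ≤ t)),
    ← Nat.mod_mod_of_dvd b (pow_dvd_pow 2 (by omega : i + 1 ≤ t)), h]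

theorem mod_eq_of_bits {a b t : ℕ} (h : ∀ i < t, a / 2 ^ i % 2 = b / 2 ^ i % 2) :
    a % 2 ^ t = b % 2 ^ t := by
  apply Nat.eq_of_testBit_eq
  intro i
  rw [Nat.testBit_mod_two_pow, Nat.testBit_mod_two_pow]
  by_cases hi : i < t
  · rw [Nat.testBit_eq_decide_div_mod_eq, Nat.testBit_eq_decide_div_mod_eq, h i hi]
  · simp [hi]

theorem levinPhi_injOn (m k : ℕ) (hk : k < 2 ^ m) {n₁ n₂ : ℕ}
    (h₁ : n₁ < 2 ^ 2 ^ m) (h₂ : n₂ < 2 ^ 2 ^ m)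
    (heq : levinPhi m k n₁ = levinPhi m k n₂) : n₁ = n₂ := by
  set M := 2 ^ m with hM
  set T := 2 ^ 2 ^ m with hT
  have hMpos : 0 < M := Nat.pow_pos (by norm_num)
  have hTpos : 0 < T := Nat.pow_pos (by norm_num)
  have window : ∀ j < M, levinD m ((k + j) % M) ((n₁ + (k + j) / M) % T)
      = levinD m ((k + j) % M) ((n₂ + (k + j) / M) % T) := by
    intro j hj
    rw [← levinPhi_bits m k n₁ j hj, ← levinPhi_bits m k n₂ j hj, heq]
  set r := M - 1 - k with hr
  -- stage 1: levinF at c ≤ r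
  have hstage1 : ∀ c ≤ r, levinF m c n₁ = levinF m c n₂ := by
    intro c hc
    set k' := M - 1 - c with hk'
    have hk'M : k' < M := by omega
    have hkk' : k ≤ k' := by omega
    have hj := window (k' - k) (by omega)
    have e1 : k + (k' - k) = k' := by omega
    rw [e1] at hj
    have e2 : k' % M = k' := Nat.mod_eq_of_lt hk'M
    have e3 : k' / M = 0 := Nat.div_eq_of_lt hk'M
    rw [e2, e3] at hj
    simp only [Nat.add_zero] at hj
    rw [Nat.mod_eq_of_lt h₁, Nat.mod_eq_of_lt h₂] at hj
    have e4 : 2 ^ m - 1 - k' = c := by omega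
    rw [levinD_eq_F m k' n₁ hk'M, levinD_eq_F m k' n₂ hk'M, e4] at hj
    exact hj
  have hlow := recover_low m r n₁ n₂ (by omega) hstage1
  have hmod : n₁ % 2 ^ (r + 1) = n₂ % 2 ^ (r + 1) :=
    mod_eq_of_bits (fun i hi => hlow i (by omega))
  -- stage 2
  set b₁ := (n₁ + 1) % T with hb₁
  set b₂ := (n₂ + 1) % T with hb₂
  have hdvd : 2 ^ (r + 1) ∣ T := pow_dvd_pow 2 (by omega)
  have hbmod : b₁ % 2 ^ (r + 1) = b₂ % 2 ^ (r + 1) := by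
    rw [hb₁, hb₂, Nat.mod_mod_of_dvd _ hdvd, Nat.mod_mod_of_dvd _ hdvd,
      Nat.add_mod n₁ 1, Nat.add_mod n₂ 1, hmod]
  have hblow : ∀ i ≤ r, b₁ / 2 ^ i % 2 = b₂ / 2 ^ i % 2 := by
    intro i hi
    exact bit_eq_of_mod_eq hbmod (by omega)
  have hbhigh : ∀ c, r < c → c < M → levinF m c b₁ = levinF m c b₂ := by
    intro c hcr hcM
    set k' := M - 1 - c with hk'
    have hk'k : k' < k := by omega
    have hj := window (M - k + k') (by omega)
    have e1 : k + (M - k + k') = M + k' := by omega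
    rw [e1] at hj
    have e2 : (M + k') % M = k' := by
      rw [Nat.add_mod_left, Nat.mod_eq_of_lt (by omega)]
    have e3 : (M + k') / M = 1 := by
      rw [Nat.add_comm, Nat.add_div_right _ hMpos, Nat.div_eq_of_lt (by omega)]
    rw [e2, e3] at hj
    have e4 : 2 ^ m - 1 - k' = c := by omega
    rw [levinD_eq_F m k' _ (by omega), levinD_eq_F m k' _ (by omega), e4] at hj
    exact hj
  have hbeq : b₁ = b₂ := recover_high m r b₁ b₂ (by omega)
    (Nat.mod_lt _ hTpos) (Nat.mod_lt _ hTpos) hblow hbhigh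
  have hx : ∀ n, n < T → (n + 1) % T = if n + 1 = T then 0 else n + 1 := by
    intro n hn
    split
    · rename_i h; rw [h, Nat.mod_self]
    · exact Nat.mod_eq_of_lt (by omega)
  rw [hb₁, hb₂, hx n₁ h₁, hx n₂ h₂] at hbeq
  split_ifs at hbeq <;> omega

theorem sum_two_pows (L : ℕ) : ∑ i ∈ Finset.range L, 2 ^ i = 2 ^ L - 1 := by
  induction L with
  | zero => simp
  | succ L ih =>
    rw [Finset.sum_range_succ, ih]
    have : 0 < 2 ^ L := Nat.pow_pos (by norm_num)
    have : 2 ^ (L + 1) = 2 * 2 ^ L := by ring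
    omega

theorem levinPhi_lt (m k n : ℕ) : levinPhi m k n < 2 ^ 2 ^ m := by
  unfold levinPhi
  calc ∑ j ∈ Finset.range (2 ^ m),
        levinD m ((k + j) % 2 ^ m) ((n + (k + j) / 2 ^ m) % 2 ^ 2 ^ m) * 2 ^ (2 ^ m - 1 - j)
      ≤ ∑ j ∈ Finset.range (2 ^ m), 1 * 2 ^ (2 ^ m - 1 - j) := by
        apply Finset.sum_le_sum
        intro j _
        exact Nat.mul_le_mul_right _ (levinD_le_one _ _ _)
    _ = ∑ j ∈ Finset.range (2 ^ m), 2 ^ (2 ^ m - 1 - j) := by simp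
    _ = ∑ j ∈ Finset.range (2 ^ m), 2 ^ j := by
        rw [← Finset.sum_range_reflect]
        apply Finset.sum_congr rfl
        intro j hj
        rw [Finset.mem_range] at hj
        congr 1
        omega
    _ = 2 ^ 2 ^ m - 1 := sum_two_pows _
    _ < 2 ^ 2 ^ m := by
        have : 0 < 2 ^ 2 ^ m := Nat.pow_pos (by norm_num)
        omega

theorem levinPhi_count (m k : ℕ) (hk : k < 2 ^ m) (a : ℕ) (ha : a ≤ 2 ^ 2 ^ m) :
    ((Finset.range (2 ^ 2 ^ m)).filter (fun n => levinPhi m k n < a)).card = a := by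
  set T := 2 ^ 2 ^ m with hT
  have himg : Finset.image (levinPhi m k) (Finset.range T) = Finset.range T := by
    apply Finset.eq_of_subset_of_card_le
    · intro v hv
      rw [Finset.mem_image] at hv
      obtain ⟨n, _, rfl⟩ := hv
      exact Finset.mem_range.mpr (levinPhi_lt m k n)
    · rw [Finset.card_range, Finset.card_image_of_injOn]
      · rw [Finset.card_range]
      · intro n₁ h₁ n₂ h₂ heq
        exact levinPhi_injOn m k hk (Finset.mem_range.mp h₁) (Finset.mem_range.mp h₂) heq
  conv_rhs => rw [← Finset.card_range a]
  apply Finset.card_nbij (fun n => levinPhi m k n)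
  · intro n hn
    rw [Finset.mem_coe, Finset.mem_filter] at hn
    exact Finset.mem_range.mpr hn.2
  · intro n₁ h₁ n₂ h₂ heq
    simp only [Finset.coe_filter, Set.mem_setOf_eq, Finset.mem_range] at h₁ h₂
    exact levinPhi_injOn m k hk h₁.1 h₂.1 heq
  · intro v hv
    simp only [Finset.coe_range, Set.mem_Iio] at hv
    have : v ∈ Finset.range T := Finset.mem_range.mpr (by omega)
    rw [← himg, Finset.mem_image] at this
    obtain ⟨n, hn, rfl⟩ := this
    simp only [Set.mem_image, Finset.mem_coe, Finset.mem_filter]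
    exact ⟨n, ⟨hn, hv⟩, rfl⟩

/-! ### Block structure of the positions -/

theorem levinN_one : levinN 1 = 0 := by simp [levinN]

theorem levinN_succ (m : ℕ) (hm : 1 ≤ m) :
    levinN (m + 1) = levinN m + 2 ^ m * 2 ^ 2 ^ m := by
  unfold levinN
  rw [Finset.sum_Ico_succ_top hm]

theorem levinN_mono : Monotone levinN := by
  intro a b hab
  unfold levinN
  exact Finset.sum_le_sum_of_subset (Finset.Ico_subset_Ico le_rfl hab)

theorem levinN_unbounded (n : ℕ) : ∃ m, 1 ≤ m ∧ n ≤ levinN m := by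
  refine ⟨n + 2, by omega, ?_⟩
  have h1 : ∀ i ∈ Finset.Ico 1 (n + 2), 1 ≤ 2 ^ i * 2 ^ 2 ^ i := fun i _ =>
    Nat.one_le_iff_ne_zero.mpr (by positivity)
  calc n ≤ (Finset.Ico 1 (n + 2)).card := by simp [Nat.card_Ico]
    _ = ∑ i ∈ Finset.Ico 1 (n + 2), 1 := by simp
    _ ≤ levinN (n + 2) := Finset.sum_le_sum h1

noncomputable def blockIdx (p : ℕ) : ℕ := sInf {m | p ≤ levinN (m + 1)}

noncomputable def levinDigit (p : ℕ) : ℕ :=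
  levinD (blockIdx p) ((p - levinN (blockIdx p) - 1) % 2 ^ blockIdx p)
    ((p - levinN (blockIdx p) - 1) / 2 ^ blockIdx p)

theorem blockIdx_spec (m q : ℕ) (hm : 1 ≤ m) (hq : q < 2 ^ m * 2 ^ 2 ^ m) :
    blockIdx (levinN m + q + 1) = m := by
  set p := levinN m + q + 1 with hp
  have hmem : m ∈ {m' | p ≤ levinN (m' + 1)} := by
    simp only [Set.mem_setOf_eq, hp, levinN_succ m hm]
    omega
  have hne : {m' | p ≤ levinN (m' + 1)}.Nonempty := ⟨m, hmem⟩
  refine le_antisymm (le_trans (Nat.sInf_le hmem) le_rfl) ?_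
  by_contra hlt
  push_neg at hlt
  have hmem' := Nat.sInf_mem hne
  rw [show sInf {m' | p ≤ levinN (m' + 1)} = blockIdx p from rfl] at hmem'
  simp only [Set.mem_setOf_eq] at hmem'
  have h2 : levinN (blockIdx p + 1) ≤ levinN m := levinN_mono (by omega)
  have h3 : p ≤ levinN m := le_trans hmem' h2
  omega

theorem levinDigit_spec (m n k : ℕ) (hm : 1 ≤ m) (hn : n < 2 ^ 2 ^ m) (hk : k < 2 ^ m) :
    levinDigit (levinN m + (2 ^ m * n + k) + 1) = levinD m k n := by
  have hq : 2 ^ m * n + k < 2 ^ m * 2 ^ 2 ^ m := by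
    calc 2 ^ m * n + k < 2 ^ m * n + 2 ^ m := by omega
      _ = 2 ^ m * (n + 1) := by ring
      _ ≤ 2 ^ m * 2 ^ 2 ^ m := Nat.mul_le_mul_left _ (by omega)
  have hb := blockIdx_spec m (2 ^ m * n + k) hm hq
  unfold levinDigit
  rw [hb]
  have he : levinN m + (2 ^ m * n + k) + 1 - levinN m - 1 = 2 ^ m * n + k := by omega
  rw [he, Nat.mul_add_mod, Nat.mod_eq_of_lt hk]
  congr 1
  rw [Nat.mul_add_div (Nat.pow_pos (by norm_num)), Nat.div_eq_of_lt hk]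
  omega

theorem levinDigit_le_one (p : ℕ) : levinDigit p ≤ 1 := levinD_le_one _ _ _

theorem levinDigit_zero : levinDigit 0 = 0 := by
  unfold levinDigit
  have h : 0 - levinN (blockIdx 0) - 1 = 0 := by omega
  rw [h, Nat.zero_mod, Nat.zero_div, levinD_zero]

/-! ### The digit expansion of `levinAlpha` -/

noncomputable def levinF' : ℕ → ℝ := fun p => (levinDigit p : ℝ) / 2 ^ p

theorem levinF'_nonneg (p : ℕ) : 0 ≤ levinF' p := by
  unfold levinF'; positivity

theorem levinF'_le (p : ℕ) : levinF' p ≤ (1 / 2) ^ p := by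
  unfold levinF'
  rw [div_pow, one_pow]
  gcongr
  exact_mod_cast levinDigit_le_one p

theorem levinF'_summable : Summable levinF' :=
  Summable.of_nonneg_of_le levinF'_nonneg levinF'_le
    (summable_geometric_of_lt_one (by norm_num) (by norm_num))

noncomputable def levinS (m : ℕ) : ℝ :=
  ∑ n ∈ Finset.range (2 ^ 2 ^ (m + 1)), ∑ k ∈ Finset.range (2 ^ (m + 1)),
    (levinD (m + 1) k n : ℝ) / 2 ^ (levinN (m + 1) + 2 ^ (m + 1) * n + k + 1)

theorem levinS_eq (m : ℕ) :
    levinS m = ∑ p ∈ Finset.Ioc (levinN (m + 1)) (levinN (m + 2)), levinF' p := by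
  unfold levinS
  rw [← Finset.sum_product']
  apply Finset.sum_nbij' (i := fun nk => levinN (m + 1) + (2 ^ (m + 1) * nk.1 + nk.2) + 1)
    (j := fun p => ((p - levinN (m + 1) - 1) / 2 ^ (m + 1), (p - levinN (m + 1) - 1) % 2 ^ (m + 1)))
  · rintro ⟨n, k⟩ hnk
    simp only [Finset.mem_product, Finset.mem_range] at hnk
    dsimp only
    rw [Finset.mem_Ioc, levinN_succ (m + 1) (by omega)]
    have h2 : 2 ^ (m + 1) * (n + 1) ≤ 2 ^ (m + 1) * 2 ^ 2 ^ (m + 1) :=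
      Nat.mul_le_mul_left _ (by omega)
    have h3 : 2 ^ (m + 1) * (n + 1) = 2 ^ (m + 1) * n + 2 ^ (m + 1) := by ring
    have h4 : 0 < 2 ^ (m + 1) := Nat.pow_pos (by norm_num)
    omega
  · intro p hp
    rw [Finset.mem_Ioc, levinN_succ (m + 1) (by omega)] at hp
    simp only [Finset.mem_product, Finset.mem_range]
    constructor
    · apply Nat.div_lt_of_lt_mul
      have h2 : 0 < 2 ^ (m + 1) := Nat.pow_pos (by norm_num)
      omega
    · exact Nat.mod_lt _ (Nat.pow_pos (by norm_num))
  · rintro ⟨n, k⟩ hnk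
    simp only [Finset.mem_product, Finset.mem_range] at hnk
    dsimp only
    have he : levinN (m + 1) + (2 ^ (m + 1) * n + k) + 1 - levinN (m + 1) - 1
        = 2 ^ (m + 1) * n + k := by omega
    rw [he, Nat.mul_add_div (Nat.pow_pos (by norm_num)), Nat.div_eq_of_lt hnk.2,
      Nat.mul_add_mod, Nat.mod_eq_of_lt hnk.2]
    simp
  · intro p hp
    rw [Finset.mem_Ioc] at hp
    dsimp only
    rw [Nat.div_add_mod]
    omega
  · rintro ⟨n, k⟩ hnk
    simp only [Finset.mem_product, Finset.mem_range] at hnk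
    dsimp only
    unfold levinF'
    rw [levinDigit_spec (m + 1) n k (by omega) hnk.1 hnk.2]
    congr 2
    omega

theorem levinS_nonneg (m : ℕ) : 0 ≤ levinS m := by
  rw [levinS_eq]
  exact Finset.sum_nonneg (fun p _ => levinF'_nonneg p)

theorem partial_sum_levinS (M : ℕ) :
    ∑ j ∈ Finset.range M, levinS j = ∑ p ∈ Finset.range (levinN (M + 1) + 1), levinF' p := by
  induction M with
  | zero =>
    simp [levinN_one, levinF', levinDigit_zero]
  | succ M ih =>
    rw [Finset.sum_range_succ, ih, levinS_eq]
    have hIoc : Finset.Ioc (levinN (M + 1)) (levinN (M + 2))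
        = Finset.Ico (levinN (M + 1) + 1) (levinN (M + 2) + 1) := by
      ext x; simp [Finset.mem_Ioc, Finset.mem_Ico]
    rw [hIoc, Finset.range_eq_Ico, Finset.range_eq_Ico]
    exact Finset.sum_Ico_consecutive levinF' (Nat.zero_le _)
      (Nat.add_le_add_right (levinN_mono (by omega : M + 1 ≤ M + 2)) 1)

theorem hasSum_levinF' : HasSum levinF' levinAlpha := by
  have hβ : HasSum levinF' (∑' p, levinF' p) := levinF'_summable.hasSum
  have htend := (hasSum_iff_tendsto_nat_of_nonneg levinF'_nonneg _).mp hβ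
  have hP : StrictMono (fun M => levinN (M + 1) + 1) := by
    apply strictMono_nat_of_lt_succ
    intro M
    have := levinN_succ (M + 1) (by omega)
    have h2 : 0 < 2 ^ (M + 1) * 2 ^ 2 ^ (M + 1) := by positivity
    omega
  have hsub : Filter.Tendsto (fun M => ∑ j ∈ Finset.range M, levinS j)
      Filter.atTop (nhds (∑' p, levinF' p)) := by
    have := htend.comp hP.tendsto_atTop
    simp only [partial_sum_levinS]; exact this
  have hS : HasSum levinS (∑' p, levinF' p) :=
    (hasSum_iff_tendsto_nat_of_nonneg levinS_nonneg _).mpr hsub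
  have : levinAlpha = ∑' p, levinF' p := hS.tsum_eq
  rw [this] at *
  exact hβ

/-! ### Tails and fractional parts -/

noncomputable def levinTau (n : ℕ) : ℝ := ∑' j : ℕ, (levinDigit (n + 1 + j) : ℝ) / 2 ^ (j + 1)

theorem levinTau_summable (n : ℕ) :
    Summable (fun j : ℕ => (levinDigit (n + 1 + j) : ℝ) / 2 ^ (j + 1)) := by
  apply Summable.of_nonneg_of_le (fun j => by positivity) (fun j => ?_)
    (summable_geometric_of_lt_one (by norm_num : (0:ℝ) ≤ 1/2) (by norm_num))
  rw [div_pow, one_pow]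
  calc (levinDigit (n + 1 + j) : ℝ) / 2 ^ (j + 1) ≤ 1 / 2 ^ (j + 1) := by
        gcongr
        exact_mod_cast levinDigit_le_one _
    _ ≤ 1 / 2 ^ j :=
        one_div_le_one_div_of_le (by positivity) (pow_le_pow_right₀ (by norm_num) (by omega))

theorem levinTau_nonneg (n : ℕ) : 0 ≤ levinTau n :=
  tsum_nonneg (fun j => by positivity)

theorem summable_half_shift : Summable (fun j : ℕ => ((1 : ℝ) / 2) ^ (j + 1)) := by
  have h : ∀ j : ℕ, ((1:ℝ)/2) ^ (j + 1) = (1/2) ^ j * (1/2) := fun j => pow_succ _ _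
  simp only [h]
  exact (summable_geometric_of_lt_one (by norm_num) (by norm_num)).mul_right _

theorem geom_half_shift : ∑' j : ℕ, ((1 : ℝ) / 2) ^ (j + 1) = 1 := by
  have h : ∀ j : ℕ, ((1:ℝ)/2) ^ (j + 1) = (1/2) ^ j * (1/2) := fun j => pow_succ _ _
  rw [tsum_congr h, tsum_mul_right, tsum_geometric_of_lt_one (by norm_num) (by norm_num)]
  norm_num

theorem levinTau_lt_one (n : ℕ) : levinTau n < 1 := by
  obtain ⟨m', hm', hle⟩ := levinN_unbounded n
  set j₀ := levinN m' - n with hj₀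
  have hpos : n + 1 + j₀ = levinN m' + (2 ^ m' * 0 + 0) + 1 := by omega
  have hzero : levinDigit (n + 1 + j₀) = 0 := by
    rw [hpos, levinDigit_spec m' 0 0 hm' (Nat.pow_pos (by norm_num))
      (Nat.pow_pos (by norm_num)), levinD_zero]
  have hle' : ∀ j : ℕ, (levinDigit (n + 1 + j) : ℝ) / 2 ^ (j + 1)
      ≤ (1/2) ^ (j + 1) - (if j = j₀ then (1/2 : ℝ) ^ (j₀ + 1) else 0) := by
    intro j
    by_cases hj : j = j₀
    · subst hj
      rw [hzero, if_pos rfl]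
      norm_num
    · rw [if_neg hj, sub_zero, div_pow, one_pow]
      gcongr
      exact_mod_cast levinDigit_le_one _
  have hs1 : Summable (fun j : ℕ => ((1:ℝ)/2) ^ (j + 1)) := summable_half_shift
  have hs2 : Summable (fun j : ℕ => (if j = j₀ then (1/2 : ℝ) ^ (j₀ + 1) else 0)) :=
    summable_of_finite_support (Set.Finite.subset (Set.finite_singleton j₀)
      (by intro x hx; simp at hx ⊢; tauto))
  have hsum : Summable (fun j : ℕ => ((1:ℝ)/2) ^ (j + 1)
      - (if j = j₀ then (1/2 : ℝ) ^ (j₀ + 1) else 0)) := hs1.sub hs2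
  calc levinTau n ≤ ∑' j : ℕ, (((1:ℝ)/2) ^ (j + 1)
        - (if j = j₀ then (1/2 : ℝ) ^ (j₀ + 1) else 0)) :=
        Summable.tsum_le_tsum hle' (levinTau_summable n) hsum
    _ = 1 - (1/2) ^ (j₀ + 1) := by
        rw [Summable.tsum_sub hs1 hs2, geom_half_shift, tsum_ite_eq]
    _ < 1 := by
        have : (0:ℝ) < (1/2) ^ (j₀ + 1) := by positivity
        linarith

theorem fract_eq_levinTau (n : ℕ) : Int.fract ((2 : ℝ) ^ n * levinAlpha) = levinTau n := by
  have hα : levinAlpha = ∑' p, levinF' p := hasSum_levinF'.tsum_eq.symm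
  have hsummable : Summable (fun p => (2 : ℝ) ^ n * levinF' p) := levinF'_summable.mul_left _
  have hsplit := Summable.sum_add_tsum_nat_add (f := fun p => (2 : ℝ) ^ n * levinF' p) (n + 1) hsummable
  have htail : ∑' j : ℕ, (2 : ℝ) ^ n * levinF' (j + (n + 1)) = levinTau n := by
    unfold levinTau
    apply tsum_congr
    intro j
    unfold levinF'
    rw [show j + (n + 1) = n + 1 + j by omega]
    rw [show (2:ℝ) ^ (n + 1 + j) = 2 ^ n * 2 ^ (j + 1) by rw [← pow_add]; ring_nf]
    field_simp
  have hhead : ∑ p ∈ Finset.range (n + 1), (2 : ℝ) ^ n * levinF' p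
      = ((∑ p ∈ Finset.range (n + 1), levinDigit p * 2 ^ (n - p) : ℕ) : ℝ) := by
    push_cast
    apply Finset.sum_congr rfl
    intro p hp
    rw [Finset.mem_range] at hp
    unfold levinF'
    rw [show (2:ℝ) ^ n = 2 ^ (n - p) * 2 ^ p by rw [← pow_add]; congr 1; omega]
    field_simp
  have h2 : (2 : ℝ) ^ n * levinAlpha
      = ((∑ p ∈ Finset.range (n + 1), levinDigit p * 2 ^ (n - p) : ℕ) : ℝ) + levinTau n := by
    rw [hα, ← tsum_mul_left, ← hsplit, hhead, htail]
  rw [h2]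
  rw [show ((∑ p ∈ Finset.range (n + 1), levinDigit p * 2 ^ (n - p) : ℕ) : ℝ)
      = ((∑ p ∈ Finset.range (n + 1), levinDigit p * 2 ^ (n - p) : ℕ) : ℤ) by push_cast; ring]
  rw [Int.fract_intCast_add]
  exact Int.fract_eq_self.mpr ⟨levinTau_nonneg n, levinTau_lt_one n⟩

/-- The window integer: `2^m` digits starting right after position `n`. -/
noncomputable def levinW (m n : ℕ) : ℕ :=
  ∑ j ∈ Finset.range (2 ^ m), levinDigit (n + 1 + j) * 2 ^ (2 ^ m - 1 - j)

theorem levinTau_split (m n : ℕ) :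
    levinTau n = (levinW m n : ℝ) / 2 ^ 2 ^ m + (1 / 2 ^ 2 ^ m) * levinTau (n + 2 ^ m) := by
  have hsplit := Summable.sum_add_tsum_nat_add
    (f := fun j : ℕ => (levinDigit (n + 1 + j) : ℝ) / 2 ^ (j + 1)) (2 ^ m) (levinTau_summable n)
  have hhead : ∑ j ∈ Finset.range (2 ^ m), (levinDigit (n + 1 + j) : ℝ) / 2 ^ (j + 1)
      = (levinW m n : ℝ) / 2 ^ 2 ^ m := by
    unfold levinW
    push_cast
    rw [Finset.sum_div]
    apply Finset.sum_congr rfl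
    intro j hj
    rw [Finset.mem_range] at hj
    rw [show (2:ℝ) ^ 2 ^ m = 2 ^ (2 ^ m - 1 - j) * 2 ^ (j + 1) by rw [← pow_add]; congr 1; omega]
    field_simp
  have htail : ∑' j : ℕ, (levinDigit (n + 1 + (j + 2 ^ m)) : ℝ) / 2 ^ (j + 2 ^ m + 1)
      = (1 / 2 ^ 2 ^ m) * levinTau (n + 2 ^ m) := by
    unfold levinTau
    rw [← tsum_mul_left]
    apply tsum_congr
    intro j
    rw [show n + 1 + (j + 2 ^ m) = n + 2 ^ m + 1 + j by omega]
    rw [show (2:ℝ) ^ (j + 2 ^ m + 1) = 2 ^ 2 ^ m * 2 ^ (j + 1) by rw [← pow_add]; congr 1; omega]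
    field_simp
  have hdef : levinTau n = ∑' j : ℕ, (levinDigit (n + 1 + j) : ℝ) / 2 ^ (j + 1) := rfl
  rw [hdef, ← hsplit, hhead, htail]

theorem fract_window_iff (m n a : ℕ) :
    Int.fract ((2 : ℝ) ^ n * levinAlpha) < (a : ℝ) / 2 ^ 2 ^ m ↔ levinW m n < a := by
  rw [fract_eq_levinTau, levinTau_split m n]
  constructor
  · intro h
    by_contra hc
    push_neg at hc
    have h1 : (a : ℝ) / 2 ^ 2 ^ m ≤ (levinW m n : ℝ) / 2 ^ 2 ^ m := by
      gcongr <;> exact_mod_cast hc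
    have h2 : 0 ≤ (1 / 2 ^ 2 ^ m : ℝ) * levinTau (n + 2 ^ m) :=
      mul_nonneg (by positivity) (levinTau_nonneg _)
    linarith
  · intro h
    have h1 : (levinW m n : ℝ) + 1 ≤ a := by exact_mod_cast h
    have h2 : levinTau (n + 2 ^ m) < 1 := levinTau_lt_one _
    have h3 : (0:ℝ) < 2 ^ 2 ^ m := by positivity
    have h4 : (1 / 2 ^ 2 ^ m : ℝ) * levinTau (n + 2 ^ m) < 1 / 2 ^ 2 ^ m := by
      calc (1 / 2 ^ 2 ^ m : ℝ) * levinTau (n + 2 ^ m) < 1 / 2 ^ 2 ^ m * 1 :=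
            mul_lt_mul_of_pos_left h2 (by positivity)
        _ = 1 / 2 ^ 2 ^ m := mul_one _
    calc (levinW m n : ℝ) / 2 ^ 2 ^ m + (1 / 2 ^ 2 ^ m) * levinTau (n + 2 ^ m)
        < (levinW m n : ℝ) / 2 ^ 2 ^ m + 1 / 2 ^ 2 ^ m := by linarith
      _ = ((levinW m n : ℝ) + 1) / 2 ^ 2 ^ m := by ring
      _ ≤ (a : ℝ) / 2 ^ 2 ^ m := by gcongr

theorem levinW_eq_phi (m k n' : ℕ) (hm : 1 ≤ m) (hk : k < 2 ^ m) (hn' : n' < 2 ^ 2 ^ m) :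
    levinW m (levinN m + (2 ^ m * n' + k)) = levinPhi m k n' := by
  unfold levinW levinPhi
  apply Finset.sum_congr rfl
  intro j hj
  rw [Finset.mem_range] at hj
  congr 1
  by_cases hkj : k + j < 2 ^ m
  · have e1 : levinN m + (2 ^ m * n' + k) + 1 + j = levinN m + (2 ^ m * n' + (k + j)) + 1 := by
      omega
    rw [e1, levinDigit_spec m n' (k + j) hm hn' hkj,
      Nat.mod_eq_of_lt hkj, Nat.div_eq_of_lt hkj, Nat.add_zero, Nat.mod_eq_of_lt hn']
  · push_neg at hkj
    have hkj2 : k + j < 2 * 2 ^ m := by omega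
    have e2 : (k + j) % 2 ^ m = k + j - 2 ^ m := by
      rw [show k + j = (k + j - 2 ^ m) + 2 ^ m by omega, Nat.add_mod_right,
        Nat.mod_eq_of_lt (by omega)]
      omega
    have e3 : (k + j) / 2 ^ m = 1 := by
      rw [show k + j = (k + j - 2 ^ m) + 1 * 2 ^ m by omega]
      rw [Nat.add_mul_div_right _ _ (Nat.pow_pos (by norm_num)),
        Nat.div_eq_of_lt (by omega)]
    rw [e2, e3]
    by_cases hlast : n' + 1 < 2 ^ 2 ^ m
    · have e4 : levinN m + (2 ^ m * n' + k) + 1 + j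
          = levinN m + (2 ^ m * (n' + 1) + (k + j - 2 ^ m)) + 1 := by
        have : 2 ^ m * (n' + 1) = 2 ^ m * n' + 2 ^ m := by ring
        omega
      rw [e4, levinDigit_spec m (n' + 1) (k + j - 2 ^ m) hm hlast (by omega),
        Nat.mod_eq_of_lt hlast]
    · have hn'T : n' + 1 = 2 ^ 2 ^ m := by omega
      have e5 : levinN m + (2 ^ m * n' + k) + 1 + j
          = levinN (m + 1) + (2 ^ (m + 1) * 0 + (k + j - 2 ^ m)) + 1 := by
        rw [levinN_succ m hm]
        have : 2 ^ m * 2 ^ 2 ^ m = 2 ^ m * n' + 2 ^ m := by rw [← hn'T]; ring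
        omega
      rw [e5, levinDigit_spec (m + 1) 0 (k + j - 2 ^ m) (by omega)
        (Nat.pow_pos (by norm_num)) (by calc k + j - 2 ^ m < 2 ^ m := by omega
          _ ≤ 2 ^ (m + 1) := Nat.pow_le_pow_right (by norm_num) (by omega)),
        levinD_zero, hn'T, Nat.mod_self, levinD_zero]

theorem count_window (m b : ℕ) (hm : 1 ≤ m) (hb : b ≤ 2 ^ 2 ^ m) :
    ((Finset.Ico (levinN m) (levinN m + 2 ^ m * 2 ^ 2 ^ m)).filter
      (fun n => levinW m n < b)).card = 2 ^ m * b := by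
  set M := 2 ^ m with hM
  set T := 2 ^ 2 ^ m with hT
  have hMpos : 0 < M := Nat.pow_pos (by norm_num)
  have step1 : ((Finset.Ico (levinN m) (levinN m + M * T)).filter (fun n => levinW m n < b)).card
      = ((Finset.range (M * T)).filter (fun q => levinW m (levinN m + q) < b)).card := by
    apply Finset.card_nbij' (i := fun n => n - levinN m) (j := fun q => levinN m + q)
    · intro n hn
      simp only [Finset.mem_coe, Finset.mem_filter, Finset.mem_Ico] at hn
      simp only [Finset.mem_coe, Finset.mem_filter, Finset.mem_range]
      constructor
      · omega
      · rw [show levinN m + (n - levinN m) = n by omega]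
        exact hn.2
    · intro q hq
      simp only [Finset.mem_coe, Finset.mem_filter, Finset.mem_range] at hq
      simp only [Finset.mem_coe, Finset.mem_filter, Finset.mem_Ico]
      exact ⟨by omega, hq.2⟩
    · intro n hn
      simp only [Finset.mem_coe, Finset.mem_filter, Finset.mem_Ico] at hn
      dsimp only
      omega
    · intro q hq
      dsimp only
      omega
  rw [step1]
  have step2 : ∀ q < M * T, levinW m (levinN m + q) < b ↔ levinPhi m (q % M) (q / M) < b := by
    intro q hq
    rw [show levinN m + q = levinN m + (M * (q / M) + q % M) by rw [Nat.div_add_mod]]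
    rw [levinW_eq_phi m (q % M) (q / M) hm (Nat.mod_lt _ hMpos)
      (Nat.div_lt_of_lt_mul (by rw [mul_comm] at hq ⊢; exact hq))]
  have step3 : ((Finset.range (M * T)).filter (fun q => levinW m (levinN m + q) < b)).card
      = ∑ k ∈ Finset.range M,
        ((Finset.range (M * T)).filter
          (fun q => levinW m (levinN m + q) < b ∧ q % M = k)).card := by
    rw [Finset.card_eq_sum_card_fiberwise (f := fun q => q % M) (t := Finset.range M)
      (fun q hq => Finset.mem_range.mpr (Nat.mod_lt _ hMpos))]
    apply Finset.sum_congr rfl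
    intro k _
    congr 1
    ext q
    simp only [Finset.mem_filter, Finset.mem_range]
    tauto
  rw [step3]
  have step4 : ∀ k ∈ Finset.range M,
      ((Finset.range (M * T)).filter
        (fun q => levinW m (levinN m + q) < b ∧ q % M = k)).card = b := by
    intro k hk
    rw [Finset.mem_range] at hk
    conv_rhs => rw [← levinPhi_count m k hk b hb]
    apply Finset.card_nbij' (i := fun q => q / M) (j := fun n' => M * n' + k)
    · intro q hq
      simp only [Finset.mem_coe, Finset.mem_filter, Finset.mem_range] at hq ⊢
      obtain ⟨hq1, hq2, hq3⟩ := hq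
      constructor
      · exact Nat.div_lt_of_lt_mul (by rw [mul_comm] at hq1 ⊢; exact hq1)
      · have := (step2 q hq1).mp hq2
        rwa [hq3] at this
    · intro n' hn'
      simp only [Finset.mem_coe, Finset.mem_filter, Finset.mem_range] at hn' ⊢
      obtain ⟨hn1, hn2⟩ := hn'
      have hqlt : M * n' + k < M * T := by
        calc M * n' + k < M * n' + M := by omega
          _ = M * (n' + 1) := by ring
          _ ≤ M * T := Nat.mul_le_mul_left _ (by omega)
      refine ⟨hqlt, ?_, by rw [Nat.mul_add_mod, Nat.mod_eq_of_lt hk]⟩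
      rw [step2 _ hqlt, Nat.mul_add_mod, Nat.mod_eq_of_lt hk,
        Nat.mul_add_div hMpos, Nat.div_eq_of_lt hk, Nat.add_zero]
      exact hn2
    · intro q hq
      simp only [Finset.mem_coe, Finset.mem_filter, Finset.mem_range] at hq
      obtain ⟨_, _, hq3⟩ := hq
      dsimp only
      rw [← hq3, Nat.div_add_mod]
    · intro n' hn'
      dsimp only
      rw [Nat.mul_add_div hMpos, Nat.div_eq_of_lt hk, Nat.add_zero]
  rw [Finset.sum_congr rfl step4, Finset.sum_const, Finset.card_range, smul_eq_mul]

/-- For every `m ≥ 1` and `0 ≤ γ < 1`: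
`|#{n_m ≤ n < n_m + 2^m 2^{2^m} : {2^n α} ∈ [0,γ)} − γ 2^m 2^{2^m}| < 5 · 2^m`. -/
theorem levin_block_count (m : ℕ) (hm : 1 ≤ m) (γ : ℝ) (hγ0 : 0 ≤ γ) (hγ1 : γ < 1) :
    |(((Finset.Ico (levinN m) (levinN m + 2 ^ m * 2 ^ 2 ^ m)).filter
        (fun n => Int.fract (2 ^ n * levinAlpha) ∈ Set.Ico (0 : ℝ) γ)).card : ℝ)
      - γ * 2 ^ m * 2 ^ 2 ^ m| < 5 * 2 ^ m := by
  have hTpos : (0:ℝ) < ((2 ^ 2 ^ m : ℕ) : ℝ) := by positivity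
  have hTR : ((2 ^ 2 ^ m : ℕ) : ℝ) = (2:ℝ) ^ 2 ^ m := by push_cast; ring
  set a : ℕ := (⌊γ * ((2 ^ 2 ^ m : ℕ) : ℝ)⌋).toNat with ha
  have h0 : (0:ℝ) ≤ γ * ((2 ^ 2 ^ m : ℕ) : ℝ) := mul_nonneg hγ0 hTpos.le
  have hfl : (0:ℤ) ≤ ⌊γ * ((2 ^ 2 ^ m : ℕ) : ℝ)⌋ := Int.floor_nonneg.mpr h0
  have hcast : ((a : ℕ) : ℝ) = ((⌊γ * ((2 ^ 2 ^ m : ℕ) : ℝ)⌋ : ℤ) : ℝ) := by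
    rw [ha]
    exact_mod_cast congrArg (fun z : ℤ => (z : ℝ)) (Int.toNat_of_nonneg hfl)
  have haf : (a:ℝ) ≤ γ * ((2 ^ 2 ^ m : ℕ) : ℝ) := by
    rw [hcast]; exact Int.floor_le _
  have haf2 : γ * ((2 ^ 2 ^ m : ℕ) : ℝ) < (a:ℝ) + 1 := by
    rw [hcast]; exact Int.lt_floor_add_one _
  have haT : a + 1 ≤ 2 ^ 2 ^ m := by
    have h1 : (a:ℝ) < ((2 ^ 2 ^ m : ℕ) : ℝ) := by
      calc (a:ℝ) ≤ γ * ((2 ^ 2 ^ m : ℕ) : ℝ) := haf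
        _ < 1 * ((2 ^ 2 ^ m : ℕ) : ℝ) := mul_lt_mul_of_pos_right hγ1 hTpos
        _ = ((2 ^ 2 ^ m : ℕ) : ℝ) := one_mul _
    have : a < 2 ^ 2 ^ m := by exact_mod_cast h1
    omega
  have hlowcount := count_window m a hm (by omega)
  have hhighcount := count_window m (a + 1) hm haT
  have hsub1 : (Finset.Ico (levinN m) (levinN m + 2 ^ m * 2 ^ 2 ^ m)).filter
      (fun n => levinW m n < a)
      ⊆ (Finset.Ico (levinN m) (levinN m + 2 ^ m * 2 ^ 2 ^ m)).filter
      (fun n => Int.fract (2 ^ n * levinAlpha) ∈ Set.Ico (0 : ℝ) γ) := by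
    apply Finset.monotone_filter_right
    intro n _ hn
    refine ⟨Int.fract_nonneg _, ?_⟩
    have h1 : Int.fract ((2:ℝ) ^ n * levinAlpha) < (a : ℝ) / 2 ^ 2 ^ m :=
      (fract_window_iff m n a).mpr hn
    have h2 : (a : ℝ) / 2 ^ 2 ^ m ≤ γ := by
      rw [div_le_iff₀ (by positivity), ← hTR]
      exact haf
    linarith
  have hsub2 : (Finset.Ico (levinN m) (levinN m + 2 ^ m * 2 ^ 2 ^ m)).filter
      (fun n => Int.fract (2 ^ n * levinAlpha) ∈ Set.Ico (0 : ℝ) γ)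
      ⊆ (Finset.Ico (levinN m) (levinN m + 2 ^ m * 2 ^ 2 ^ m)).filter
      (fun n => levinW m n < a + 1) := by
    apply Finset.monotone_filter_right
    intro n _ hn
    obtain ⟨-, hlt⟩ := hn
    apply (fract_window_iff m n (a + 1)).mp
    have h2 : γ < ((a + 1 : ℕ) : ℝ) / 2 ^ 2 ^ m := by
      rw [lt_div_iff₀ (by positivity), ← hTR]
      exact_mod_cast haf2
    linarith
  have hc1 := hlowcount ▸ Finset.card_le_card hsub1
  have hc2 := hhighcount ▸ Finset.card_le_card hsub2
  set C : ℕ := ((Finset.Ico (levinN m) (levinN m + 2 ^ m * 2 ^ 2 ^ m)).filter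
      (fun n => Int.fract (2 ^ n * levinAlpha) ∈ Set.Ico (0 : ℝ) γ)).card with hC
  have hr1 : ((2:ℝ) ^ m) * a ≤ (C:ℝ) := by exact_mod_cast hc1
  have hr2 : (C:ℝ) ≤ ((2:ℝ) ^ m) * a + 2 ^ m := by
    have : (C:ℝ) ≤ ((2 ^ m * (a + 1) : ℕ) : ℝ) := by exact_mod_cast hc2
    push_cast at this
    linarith
  have hupos : (0:ℝ) < 2 ^ m := by positivity
  have hγe : γ * 2 ^ m * 2 ^ 2 ^ m = (2:ℝ) ^ m * (γ * ((2 ^ 2 ^ m : ℕ) : ℝ)) := by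
    rw [hTR]; ring
  have hm1 : (2:ℝ) ^ m * a ≤ 2 ^ m * (γ * ((2 ^ 2 ^ m : ℕ) : ℝ)) :=
    mul_le_mul_of_nonneg_left haf hupos.le
  have hm2 : (2:ℝ) ^ m * (γ * ((2 ^ 2 ^ m : ℕ) : ℝ)) < 2 ^ m * a + 2 ^ m := by
    have := mul_lt_mul_of_pos_left haf2 hupos
    linarith [this]
  rw [hγe, abs_lt]
  constructor <;> linarith
end

section
/- For every integer m > 7, the number of pairs (i, j) of integers with 2·2^{m−7} ≤ i < 2^{m−3}, 0 ≤ j < 2^{m−7}, and binom(i+1+j, j) ≡ 0 (mod 2) equals 14·(4^{m−7} − 3^{m−7}). Equivalently, the relative number of 1s in the matrix D_m = (binom(i+1+j, j) + 1 mod 2), with i ranging over 2^{m−3} − 14·2^{m−7} ≤ i < 2^{m−3} and 0 ≤ j < 2^{m−7}, is 1 − (3/4)^{m−7}. -/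
open Finset

private lemma even_odd_split {M : Type*} [AddCommMonoid M] (f : ℕ → M) (N : ℕ) :
    ∑ j ∈ range (2 * N), f j = ∑ a ∈ range N, (f (2 * a) + f (2 * a + 1)) := by
  induction N with
  | zero => simp
  | succ N ih =>
      have : 2 * (N + 1) = (2 * N) + 1 + 1 := by ring
      rw [this, Finset.sum_range_succ, Finset.sum_range_succ, ih, Finset.sum_range_succ,
        add_assoc]

private lemma choose_step (k j : ℕ) :
    Nat.choose (k + j) j % 2 =
      if k % 2 = 1 ∧ j % 2 = 1 then 0 else Nat.choose (k / 2 + j / 2) (j / 2) % 2 := by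
  have h := @Choose.choose_modEq_choose_mod_mul_choose_div_nat (k + j) j 2 ⟨Nat.prime_two⟩
  rw [Nat.ModEq] at h
  rcases Nat.mod_two_eq_zero_or_one k with hk | hk <;>
    rcases Nat.mod_two_eq_zero_or_one j with hj | hj
  · have h1 : (k + j) % 2 = 0 := by omega
    have h2 : (k + j) / 2 = k / 2 + j / 2 := by omega
    rw [h1, hj, h2] at h
    simp only [Nat.choose_self, Nat.choose_zero_right, one_mul] at h
    simp [hk, h]
  · have h1 : (k + j) % 2 = 1 := by omega
    have h2 : (k + j) / 2 = k / 2 + j / 2 := by omega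
    rw [h1, hj, h2] at h
    simp only [Nat.choose_self, Nat.choose_zero_right, one_mul] at h
    simp [hk, h]
  · have h1 : (k + j) % 2 = 1 := by omega
    have h2 : (k + j) / 2 = k / 2 + j / 2 := by omega
    rw [h1, hj, h2] at h
    simp only [Nat.choose_self, Nat.choose_zero_right, one_mul] at h
    simp [hj, h]
  · have h1 : (k + j) % 2 = 0 := by omega
    have h2 : (k + j) / 2 = k / 2 + j / 2 + 1 := by omega
    rw [h1, hj, h2] at h
    simp only [Nat.choose_zero_succ, zero_mul, Nat.zero_mod] at h
    simp [hk, hj, h]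

private def g : ℕ → ℕ → ℕ
  | 0, _ => 1
  | n + 1, k => (if k % 2 = 0 then 2 else 1) * g n (k / 2)

private lemma f_eq_g (n k : ℕ) :
    ((Finset.range (2 ^ n)).filter (fun j => Nat.choose (k + j) j % 2 = 1)).card = g n k := by
  induction n generalizing k with
  | zero => simp [g, Finset.filter_singleton]
  | succ n ih =>
      rw [Finset.card_filter]
      have h2 : (2 : ℕ) ^ (n + 1) = 2 * 2 ^ n := by ring
      rw [h2, even_odd_split (fun j => if Nat.choose (k + j) j % 2 = 1 then 1 else 0) (2 ^ n)]
      have key : ∀ a : ℕ,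
          ((if Nat.choose (k + 2 * a) (2 * a) % 2 = 1 then 1 else 0) +
            (if Nat.choose (k + (2 * a + 1)) (2 * a + 1) % 2 = 1 then 1 else 0) : ℕ)
          = (if k % 2 = 0 then 2 else 1) *
              (if Nat.choose (k / 2 + a) a % 2 = 1 then 1 else 0) := by
        intro a
        have e1 := choose_step k (2 * a)
        have e2 := choose_step k (2 * a + 1)
        have d1 : (2 * a) / 2 = a := by omega
        have d2 : (2 * a + 1) / 2 = a := by omega
        have m1 : (2 * a) % 2 = 0 := by omega
        have m2 : (2 * a + 1) % 2 = 1 := by omega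
        rw [d1, m1] at e1
        rw [d2, m2] at e2
        rcases Nat.mod_two_eq_zero_or_one k with hk | hk <;>
          simp [hk] at e1 e2 ⊢ <;> rw [e1, e2] <;> split <;> simp
      rw [Finset.sum_congr rfl (fun a _ => key a), ← Finset.mul_sum, ← Finset.card_filter, ih]
      rfl

private lemma g_sum (n : ℕ) : ∑ k ∈ range (2 ^ n), g n k = 3 ^ n := by
  induction n with
  | zero => simp [g]
  | succ n ih =>
      have h2 : (2 : ℕ) ^ (n + 1) = 2 * 2 ^ n := by ring
      rw [h2, even_odd_split (g (n + 1)) (2 ^ n)]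
      have key : ∀ a : ℕ, g (n + 1) (2 * a) + g (n + 1) (2 * a + 1) = 3 * g n a := by
        intro a
        have m1 : (2 * a) % 2 = 0 := by omega
        have m2 : (2 * a + 1) % 2 = 1 := by omega
        have d1 : (2 * a) / 2 = a := by omega
        have d2 : (2 * a + 1) / 2 = a := by omega
        simp [g, m1, m2, d1, d2]
        ring
      rw [Finset.sum_congr rfl (fun a _ => key a), ← Finset.mul_sum, ih]
      ring

private lemma g_periodic (n k : ℕ) : g n (k + 2 ^ n) = g n k := by
  induction n generalizing k with
  | zero => simp [g]
  | succ n ih =>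
      have m : (k + 2 ^ (n + 1)) % 2 = k % 2 := by
        have : (2 : ℕ) ^ (n + 1) = 2 * 2 ^ n := by ring
        omega
      have d : (k + 2 ^ (n + 1)) / 2 = k / 2 + 2 ^ n := by
        have : (2 : ℕ) ^ (n + 1) = 2 * 2 ^ n := by ring
        omega
      simp [g, m, d, ih]

private lemma g_window (n : ℕ) : ∀ a : ℕ, ∑ k ∈ Finset.Ico a (a + 2 ^ n), g n k = 3 ^ n := by
  intro a
  induction a with
  | zero => simpa using g_sum n
  | succ a ih =>
      have h1 : ∑ k ∈ Finset.Ico a (a + 2 ^ n + 1), g n k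
          = ∑ k ∈ Finset.Ico a (a + 2 ^ n), g n k + g n (a + 2 ^ n) :=
        Finset.sum_Ico_succ_top (Nat.le_add_right a (2 ^ n)) _
      have h2 : ∑ k ∈ Finset.Ico a (a + 2 ^ n + 1), g n k
          = g n a + ∑ k ∈ Finset.Ico (a + 1) (a + 2 ^ n + 1), g n k :=
        Finset.sum_eq_sum_Ico_succ_bot (Nat.lt_succ_of_le (Nat.le_add_right a (2 ^ n))) _
      have h3 : a + 1 + 2 ^ n = a + 2 ^ n + 1 := by ring
      rw [h3]
      rw [g_periodic n a] at h1
      omega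

private lemma g_blocks (n : ℕ) : ∀ c a : ℕ, ∑ k ∈ Finset.Ico a (a + c * 2 ^ n), g n k = c * 3 ^ n := by
  intro c
  induction c with
  | zero => simp
  | succ c ih =>
      intro a
      have h : a + (c + 1) * 2 ^ n = (a + 2 ^ n) + c * 2 ^ n := by ring
      rw [h, ← Finset.sum_Ico_consecutive (f := g n) (m := a) (n := a + 2 ^ n)
        (k := (a + 2 ^ n) + c * 2 ^ n) (Nat.le_add_right a (2 ^ n)) (Nat.le_add_right _ _), g_window n a, ih (a + 2 ^ n)]
      ring

/-- For `m > 7`, the number of pairs `(i,j)` with `2·2^{m−7} ≤ i < 2^{m−3}`,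
`0 ≤ j < 2^{m−7}` and `binom(i+1+j, j)` even equals `14·(4^{m−7} − 3^{m−7})`;
equivalently, the relative number of `1`s in the matrix
`D_m = (binom(i+1+j,j) + 1 mod 2)` is `1 − (3/4)^{m−7}`. -/
theorem count_even_choose (m : ℕ) (hm : 7 < m) :
    ((Finset.Ico (2 * 2 ^ (m - 7)) (2 ^ (m - 3)) ×ˢ Finset.range (2 ^ (m - 7))).filter
      (fun p => Nat.choose (p.1 + 1 + p.2) p.2 % 2 = 0)).card
      = 14 * (4 ^ (m - 7) - 3 ^ (m - 7)) := by
  set n := m - 7 with hn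
  have hm3 : m - 3 = n + 4 := by omega
  have h16 : (2 : ℕ) ^ (m - 3) = 16 * 2 ^ n := by rw [hm3]; ring
  set S := Finset.Ico (2 * 2 ^ n) (2 ^ (m - 3)) ×ˢ Finset.range (2 ^ n) with hS
  -- odd count
  have hodd : (S.filter (fun p => Nat.choose (p.1 + 1 + p.2) p.2 % 2 = 1)).card = 14 * 3 ^ n := by
    rw [Finset.card_filter, hS, Finset.sum_product]
    have inner : ∀ i : ℕ,
        (∑ j ∈ Finset.range (2 ^ n), if Nat.choose (i + 1 + j) j % 2 = 1 then (1:ℕ) else 0)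
          = g n (i + 1) := by
      intro i
      rw [← Finset.card_filter]
      exact f_eq_g n (i + 1)
    rw [Finset.sum_congr rfl (fun i _ => inner i)]
    have shift : ∑ i ∈ Finset.Ico (2 * 2 ^ n) (2 ^ (m - 3)), g n (i + 1)
        = ∑ k ∈ Finset.Ico (2 * 2 ^ n + 1) (2 ^ (m - 3) + 1), g n k := by
      rw [Finset.sum_Ico_eq_sum_range, Finset.sum_Ico_eq_sum_range]
      have : 2 ^ (m - 3) + 1 - (2 * 2 ^ n + 1) = 2 ^ (m - 3) - 2 * 2 ^ n := by omega
      rw [this]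
      apply Finset.sum_congr rfl
      intro i _
      congr 1
      omega
    rw [shift]
    have hlen : 2 ^ (m - 3) + 1 = (2 * 2 ^ n + 1) + 14 * 2 ^ n := by rw [h16]; ring
    rw [hlen, g_blocks n 14 (2 * 2 ^ n + 1)]
  have hcard : S.card = 14 * 4 ^ n := by
    rw [hS, Finset.card_product, Nat.card_Ico, Finset.card_range, h16]
    have : 16 * 2 ^ n - 2 * 2 ^ n = 14 * 2 ^ n := by omega
    rw [this]
    rw [show (4:ℕ) ^ n = 2 ^ n * 2 ^ n by rw [← mul_pow]; norm_num]
    ring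
  have hsplit := Finset.card_filter_add_card_filter_not
    (s := S) (p := fun p => Nat.choose (p.1 + 1 + p.2) p.2 % 2 = 1)
  have heq : S.filter (fun p => ¬ Nat.choose (p.1 + 1 + p.2) p.2 % 2 = 1)
      = S.filter (fun p => Nat.choose (p.1 + 1 + p.2) p.2 % 2 = 0) := by
    apply Finset.filter_congr
    intro p _
    constructor <;> intro h <;> omega
  rw [heq] at hsplit
  have h34 : (3:ℕ) ^ n ≤ 4 ^ n := Nat.pow_le_pow_left (by norm_num) n
  omega
end

section
/- Fix an integer m ≥ 1 and let k, t be integers with 0 ≤ k < 2^m, 1 ≤ t ≤ 2^m and k + t ≤ 2^m − 1. Then, over 𝔽₂, the row vector c_{k+t,t} equals ξ_t · A_{k,t}; that is, for every l with 0 ≤ l < t one has binom(k+t+l, l) ≡ ∑_{j=0}^{t−1} binom(t, j)·binom(k+j+l, l) (mod 2). -/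
open Finset

lemma sum_choose_mul_choose (t b : ℕ) (hb : b ≤ t) :
    ∑ j ∈ Finset.range (t + 1), Nat.choose t j * Nat.choose j b
      = Nat.choose t b * 2 ^ (t - b) := by
  rw [Finset.range_eq_Ico, ← Finset.sum_Ico_consecutive _ (Nat.zero_le b)
    (by omega : b ≤ t + 1)]
  have h1 : ∑ j ∈ Finset.Ico 0 b, Nat.choose t j * Nat.choose j b = 0 := by
    apply Finset.sum_eq_zero
    intro j hj
    simp only [Finset.mem_Ico] at hj
    rw [Nat.choose_eq_zero_of_lt hj.2, mul_zero]
  rw [h1, zero_add, Finset.sum_Ico_eq_sum_range]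
  have h2 : t + 1 - b = (t - b) + 1 := by omega
  rw [h2]
  have h3 : ∀ i ∈ Finset.range ((t - b) + 1),
      Nat.choose t (b + i) * Nat.choose (b + i) b
        = Nat.choose t b * Nat.choose (t - b) i := by
    intro i hi
    simp only [Finset.mem_range] at hi
    have := Nat.choose_mul (n := t) (k := b + i) (s := b) (by omega)
    simpa using this
  rw [Finset.sum_congr rfl h3, ← Finset.mul_sum, Nat.sum_range_choose]

lemma full_sum_even (k t l : ℕ) (hl : l < t) :
    (∑ j ∈ Finset.range (t + 1),
      (Nat.choose t j * Nat.choose (k + j + l) l : ZMod 2)) = 0 := by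
  have hV : ∀ j, (Nat.choose (k + j + l) l : ZMod 2)
      = ∑ ij ∈ Finset.HasAntidiagonal.antidiagonal l,
          (Nat.choose (k + l) ij.1 * Nat.choose j ij.2 : ZMod 2) := by
    intro j
    have : k + j + l = (k + l) + j := by ring
    rw [this, Nat.add_choose_eq]
    push_cast
    rfl
  calc ∑ j ∈ Finset.range (t + 1),
        (Nat.choose t j * Nat.choose (k + j + l) l : ZMod 2)
      = ∑ j ∈ Finset.range (t + 1), ∑ ij ∈ Finset.HasAntidiagonal.antidiagonal l,
          (Nat.choose t j : ZMod 2) *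
            ((Nat.choose (k + l) ij.1 : ZMod 2) * (Nat.choose j ij.2 : ZMod 2)) := by
        refine Finset.sum_congr rfl fun j _ => ?_
        rw [hV j, Finset.mul_sum]
    _ = ∑ ij ∈ Finset.HasAntidiagonal.antidiagonal l,
          (Nat.choose (k + l) ij.1 : ZMod 2) *
            ∑ j ∈ Finset.range (t + 1),
              ((Nat.choose t j : ZMod 2) * (Nat.choose j ij.2 : ZMod 2)) := by
        rw [Finset.sum_comm]
        refine Finset.sum_congr rfl fun ij _ => ?_
        rw [Finset.mul_sum]
        refine Finset.sum_congr rfl fun j _ => ?_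
        ring
    _ = 0 := by
        apply Finset.sum_eq_zero
        intro ij hij
        have hb : ij.2 ≤ l := by
          rw [Finset.HasAntidiagonal.mem_antidiagonal] at hij; omega
        have hbt : ij.2 ≤ t := le_trans hb (le_of_lt hl)
        have hsum : ∑ j ∈ Finset.range (t + 1),
            ((Nat.choose t j : ZMod 2) * (Nat.choose j ij.2 : ZMod 2))
            = ((Nat.choose t ij.2 * 2 ^ (t - ij.2) : ℕ) : ZMod 2) := by
          rw [← sum_choose_mul_choose t ij.2 hbt]
          push_cast
          rfl
        rw [hsum]
        push_cast
        have h2 : ((2 : ZMod 2)) = 0 := by decide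
        rw [h2, zero_pow (by omega : t - ij.2 ≠ 0), mul_zero, mul_zero]

/-- Over `𝔽₂`, `c_{k+t,t} = ξ_t · A_{k,t}`: for `m ≥ 1`, `0 ≤ k < 2^m`,
`1 ≤ t ≤ 2^m` with `k + t ≤ 2^m − 1`, and every `0 ≤ l < t`,
`binom(k+t+l, l) ≡ ∑_{j=0}^{t−1} binom(t,j)·binom(k+j+l, l) (mod 2)`. -/
theorem c_row_eq_xi_mul_A (m k t : ℕ) (hm : 1 ≤ m) (hk : k < 2 ^ m)
    (ht1 : 1 ≤ t) (ht2 : t ≤ 2 ^ m) (hkt : k + t ≤ 2 ^ m - 1) :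
    ∀ l < t, Nat.choose (k + t + l) l ≡
      (∑ j ∈ Finset.range t, Nat.choose t j * Nat.choose (k + j + l) l) [MOD 2] := by
  intro l hl
  rw [← ZMod.natCast_eq_natCast_iff]
  have hfull := full_sum_even k t l hl
  rw [Finset.sum_range_succ] at hfull
  push_cast
  push_cast at hfull
  rw [Nat.choose_self] at hfull
  norm_num at hfull
  rw [← sub_eq_zero, CharTwo.sub_eq_add, add_comm]
  exact hfull
end

section
/- Fix an integer m ≥ 1 and let k, t be integers with 0 ≤ k < 2^m, 1 ≤ t ≤ 2^m and k + t ≤ 2^m − 1. Then, over 𝔽₂, the row vector d_{k+t,t} equals ξ_t · B_{k,t} + c_{k+t,2^m−t}; that is, for every l with t ≤ l < 2^m one has binom(k+t+l, l) ≡ ∑_{j=0}^{t−1} binom(t, j)·binom(k+j+l, l) + binom(k+l, l−t) (mod 2). -/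
open Finset

private lemma zmod2_add_self : ∀ x : ZMod 2, x + x = 0 := by decide

private lemma key (l : ℕ) : ∀ t, t ≤ l → ∀ k,
    (∑ j ∈ range (t + 1),
        ((Nat.choose t j : ZMod 2) * (Nat.choose (k + j + l) l : ZMod 2)))
      = (Nat.choose (k + l) (l - t) : ZMod 2) := by
  intro t
  induction t with
  | zero => intro _ k; simp
  | succ t ih =>
    intro hle k
    have ht : t ≤ l := le_trans (Nat.le_succ t) hle
    have h1 : (∑ j ∈ range (t + 2),
          ((Nat.choose (t + 1) j : ZMod 2) * (Nat.choose (k + j + l) l : ZMod 2)))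
        = (∑ j ∈ range (t + 1),
            ((Nat.choose t j : ZMod 2) * (Nat.choose (k + j + l) l : ZMod 2)))
        + (∑ j ∈ range (t + 1),
            ((Nat.choose t j : ZMod 2) * (Nat.choose ((k + 1) + j + l) l : ZMod 2))) := by
      rw [Finset.sum_range_succ'
        (fun j => ((Nat.choose (t + 1) j : ZMod 2) * (Nat.choose (k + j + l) l : ZMod 2))) (t + 1)]
      have e1 : ∀ i, ((Nat.choose (t + 1) (i + 1) : ZMod 2)
            * (Nat.choose (k + (i + 1) + l) l : ZMod 2))
          = (Nat.choose t i : ZMod 2) * (Nat.choose ((k + 1) + i + l) l : ZMod 2)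
            + (Nat.choose t (i + 1) : ZMod 2) * (Nat.choose (k + (i + 1) + l) l : ZMod 2) := by
        intro i
        have : k + (i + 1) + l = (k + 1) + i + l := by ring
        rw [Nat.choose_succ_succ, this]
        push_cast
        ring
      rw [Finset.sum_congr rfl (fun i _ => e1 i), Finset.sum_add_distrib]
      have h2 : (∑ i ∈ range (t + 1),
            ((Nat.choose t (i + 1) : ZMod 2) * (Nat.choose (k + (i + 1) + l) l : ZMod 2)))
          + ((Nat.choose (t + 1) 0 : ZMod 2) * (Nat.choose (k + 0 + l) l : ZMod 2))
          = (∑ j ∈ range (t + 1),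
            ((Nat.choose t j : ZMod 2) * (Nat.choose (k + j + l) l : ZMod 2))) := by
        rw [Finset.sum_range_succ]
        rw [Finset.sum_range_succ'
          (fun j => ((Nat.choose t j : ZMod 2) * (Nat.choose (k + j + l) l : ZMod 2))) t]
        simp [Nat.choose_succ_self]
      linear_combination h2
    rw [h1, ih ht k, ih ht (k + 1)]
    -- Pascal on the RHS
    have hs : l - t = (l - (t + 1)) + 1 := by omega
    have hp : Nat.choose ((k + 1) + l) (l - t)
        = Nat.choose (k + l) (l - (t + 1)) + Nat.choose (k + l) (l - t) := by
      have hkl : (k + 1) + l = (k + l) + 1 := by ring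
      rw [hkl, hs, Nat.choose_succ_succ, Nat.succ_eq_add_one, ← hs]
    rw [hp]
    push_cast
    linear_combination zmod2_add_self ((Nat.choose (k + l) (l - t) : ZMod 2))

/-- Over `𝔽₂`, `d_{k+t,t} = ξ_t · B_{k,t} + c_{k+t,2^m−t}`: for `m ≥ 1`,
`0 ≤ k < 2^m`, `1 ≤ t ≤ 2^m` with `k + t ≤ 2^m − 1`, and every `t ≤ l < 2^m`,
`binom(k+t+l, l) ≡ ∑_{j=0}^{t−1} binom(t,j)·binom(k+j+l, l) + binom(k+l, l−t) (mod 2)`. -/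
theorem d_row_eq_xi_mul_B_add_c (m k t : ℕ) (hm : 1 ≤ m) (hk : k < 2 ^ m)
    (ht1 : 1 ≤ t) (ht2 : t ≤ 2 ^ m) (hkt : k + t ≤ 2 ^ m - 1) :
    ∀ l, t ≤ l → l < 2 ^ m → Nat.choose (k + t + l) l ≡
      (∑ j ∈ Finset.range t, Nat.choose t j * Nat.choose (k + j + l) l)
        + Nat.choose (k + l) (l - t) [MOD 2] := by
  intro l hl _
  rw [← ZMod.natCast_eq_natCast_iff]
  push_cast
  have hkey := key l t hl k
  rw [Finset.sum_range_succ] at hkey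
  simp only [Nat.choose_self, Nat.cast_one, one_mul] at hkey
  linear_combination hkey - zmod2_add_self
    (∑ j ∈ range t, ((Nat.choose t j : ZMod 2) * (Nat.choose (k + j + l) l : ZMod 2)))
end

section
/- For all nonnegative integers t, k, l one has ∑_{j=0}^{t} binom(t, j)·binom(k+l+j, l) ≡ binom(k+l, l−t) (mod 2), where the binomial coefficient binom(a, b) is understood to be 0 when b < 0 (so in particular the left-hand side is even whenever l < t). -/
/-- For all nonnegative integers `t, k, l`:
`∑_{j=0}^{t} binom(t,j)·binom(k+l+j, l) ≡ binom(k+l, l−t) (mod 2)`,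
where `binom(a,b) = 0` when `b < 0` (so the right-hand side is `0` when `l < t`). -/
theorem sum_choose_mul_choose_mod_two (t k l : ℕ) :
    (∑ j ∈ Finset.range (t + 1), Nat.choose t j * Nat.choose (k + l + j) l) ≡
      (if t ≤ l then Nat.choose (k + l) (l - t) else 0) [MOD 2] := by
  induction t generalizing k with
  | zero => simp; rfl
  | succ t ih =>
    have key : (∑ j ∈ Finset.range (t + 1 + 1), Nat.choose (t+1) j * Nat.choose (k + l + j) l)
        = (∑ j ∈ Finset.range (t + 1), Nat.choose t j * Nat.choose (k + l + j) l)
          + (∑ j ∈ Finset.range (t + 1), Nat.choose t j * Nat.choose ((k+1) + l + j) l) := by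
      rw [Finset.sum_range_succ' (fun j => Nat.choose (t+1) j * Nat.choose (k + l + j) l)]
      simp only [Nat.choose_succ_succ, add_mul, Finset.sum_add_distrib, Nat.succ_eq_add_one]
      have h2 : (∑ x ∈ Finset.range (t + 1), Nat.choose t x * Nat.choose (k + l + (x+1)) l)
          = ∑ j ∈ Finset.range (t + 1), Nat.choose t j * Nat.choose ((k+1) + l + j) l := by
        apply Finset.sum_congr rfl
        intro j _
        congr 2
        omega
      rw [h2]
      have h1 := Finset.sum_range_succ' (fun j => Nat.choose t j * Nat.choose (k + l + j) l) (t+1)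
      rw [Finset.sum_range_succ] at h1
      simp only [Nat.choose_succ_self, zero_mul, add_zero, Nat.choose_zero_right, one_mul,
        Nat.choose_zero_right] at h1 ⊢
      omega
    rw [key]
    have H := (ih k).add (ih (k+1))
    refine H.trans ?_
    by_cases h1 : t + 1 ≤ l
    · have ht : t ≤ l := by omega
      rw [if_pos ht, if_pos ht, if_pos h1]
      have hlt : l - t = (l - (t+1)) + 1 := by omega
      have hk1 : k + 1 + l = k + l + 1 := by omega
      rw [hlt, hk1, Nat.choose_succ_succ']
      have heq : Nat.choose (k+l) (l - (t+1) + 1) + (Nat.choose (k+l) (l - (t+1)) +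
          Nat.choose (k+l) (l - (t+1) + 1)) =
          Nat.choose (k+l) (l - (t+1)) + 2 * Nat.choose (k+l) (l - (t+1) + 1) := by ring
      rw [heq]
      calc Nat.choose (k+l) (l - (t+1)) + 2 * Nat.choose (k+l) (l - (t+1) + 1)
          ≡ Nat.choose (k+l) (l - (t+1)) + 0 [MOD 2] :=
            Nat.ModEq.add_left _ (Nat.modEq_zero_iff_dvd.mpr ⟨_, rfl⟩)
        _ = Nat.choose (k+l) (l - (t+1)) := by omega
    · by_cases h2 : t ≤ l
      · have htl : t = l := by omega
        rw [if_pos h2, if_pos h2, if_neg h1]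
        subst htl
        simp only [Nat.sub_self, Nat.choose_zero_right]
        decide
      · rw [if_neg h2, if_neg h2, if_neg h1]
end

section
/- For all nonnegative integers t, k and every l with 0 ≤ l ≤ t − 1 one has ∑_{j=0}^{t} binom(t, j)·binom(k+l+j, l) ≡ 0 (mod 2). -/
lemma inner_sum_choose (t i : ℕ) (hi : i ≤ t) :
    ∑ j ∈ Finset.range (t + 1), Nat.choose t j * Nat.choose j i
      = Nat.choose t i * 2 ^ (t - i) := by
  have h1 : ∑ j ∈ Finset.range (t + 1), Nat.choose t j * Nat.choose j i
      = ∑ j ∈ Finset.Ico i (t + 1), Nat.choose t j * Nat.choose j i := by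
    refine (Finset.sum_subset ?_ ?_).symm
    · intro x hx; simp only [Finset.mem_Ico] at hx; simp [hx.2]
    · intro x hx hx'
      simp only [Finset.mem_range] at hx
      simp only [Finset.mem_Ico, not_and, not_lt] at hx'
      simp [Nat.choose_eq_zero_of_lt (by omega : x < i)]
  rw [h1, Finset.sum_Ico_eq_sum_range]
  have h2 : t + 1 - i = t - i + 1 := by omega
  rw [h2, ← Nat.sum_range_choose (t - i), Finset.mul_sum]
  refine Finset.sum_congr rfl fun m hm => ?_
  simp only [Finset.mem_range] at hm
  have hmt : i + m ≤ t := by omega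
  have := Nat.choose_mul (n := t) (Nat.le_add_right i m)
  simpa [Nat.add_sub_cancel_left] using this

/-- For all nonnegative integers `t, k` and every `l` with `0 ≤ l ≤ t − 1`:
`∑_{j=0}^{t} binom(t,j)·binom(k+l+j, l) ≡ 0 (mod 2)`. -/
theorem sum_choose_mul_choose_eq_zero_mod_two (t k l : ℕ) (hl : l < t) :
    (∑ j ∈ Finset.range (t + 1), Nat.choose t j * Nat.choose (k + l + j) l) ≡ 0 [MOD 2] := by
  have key : ∑ j ∈ Finset.range (t + 1), Nat.choose t j * Nat.choose (k + l + j) l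
      = ∑ ij ∈ Finset.HasAntidiagonal.antidiagonal l, Nat.choose (k + l) ij.1 *
          (Nat.choose t ij.2 * 2 ^ (t - ij.2)) := by
    have : ∀ j, Nat.choose (k + l + j) l
        = ∑ ij ∈ Finset.HasAntidiagonal.antidiagonal l, Nat.choose (k + l) ij.1 * Nat.choose j ij.2 :=
      fun j => Nat.add_choose_eq (k + l) j l
    simp only [this, Finset.mul_sum]
    rw [Finset.sum_comm]
    refine Finset.sum_congr rfl fun ij hij => ?_
    have h2 : ij.2 ≤ l := Finset.HasAntidiagonal.antidiagonal.snd_le hij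
    rw [← inner_sum_choose t ij.2 (le_of_lt (lt_of_le_of_lt h2 hl)), Finset.mul_sum]
    refine Finset.sum_congr rfl fun j _ => by ring
  rw [key]
  show _ % 2 = 0 % 2
  simp only [Nat.zero_mod]
  rw [← Nat.dvd_iff_mod_eq_zero]
  refine Finset.dvd_sum fun ij hij => ?_
  have h2 : ij.2 ≤ l := Finset.HasAntidiagonal.antidiagonal.snd_le hij
  have : 1 ≤ t - ij.2 := by omega
  exact dvd_mul_of_dvd_right (dvd_mul_of_dvd_right (dvd_pow_self 2 (by omega)) _) _
end

section
/- For all nonnegative integers t ≥ 1, k and every l with 0 ≤ l ≤ t − 1 one has ∑_{j=0}^{t−1} binom(t, j)·binom(k+l+j, l) ≡ binom(k+l+t, l) (mod 2). -/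
lemma aux_sum_even (t i : ℕ) (h : i < t) :
    2 ∣ ∑ j ∈ Finset.range (t + 1), Nat.choose t j * Nat.choose j i := by
  have h1 : ∑ j ∈ Finset.range (t + 1), Nat.choose t j * Nat.choose j i
      = ∑ j ∈ Finset.Ico i (t + 1), Nat.choose t j * Nat.choose j i := by
    refine (Finset.sum_subset ?_ ?_).symm
    · intro x hx
      simp only [Finset.mem_Ico, Finset.mem_range] at *
      omega
    · intro x hx hx'
      simp only [Finset.mem_Ico, Finset.mem_range] at *
      have : x < i := by omega
      simp [Nat.choose_eq_zero_of_lt this]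
  have h2 : ∑ j ∈ Finset.Ico i (t + 1), Nat.choose t j * Nat.choose j i
      = ∑ j ∈ Finset.range (t + 1 - i), Nat.choose t (i + j) * Nat.choose (i + j) i := by
    rw [Finset.sum_Ico_eq_sum_range]
  have h3 : ∀ j ∈ Finset.range (t + 1 - i),
      Nat.choose t (i + j) * Nat.choose (i + j) i = Nat.choose t i * Nat.choose (t - i) j := by
    intro j hj
    simp only [Finset.mem_range] at hj
    have hkn : i + j ≤ t := by omega
    have hsk : i ≤ i + j := Nat.le_add_right i j
    rw [Nat.choose_mul hsk, Nat.add_sub_cancel_left]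
  have h4 : t + 1 - i = (t - i) + 1 := by omega
  rw [h1, h2, Finset.sum_congr rfl h3, ← Finset.mul_sum, h4, Nat.sum_range_choose]
  exact Dvd.dvd.mul_left (dvd_pow_self 2 (by omega)) _

/-- For `t ≥ 1`, all `k ≥ 0` and every `l` with `0 ≤ l ≤ t − 1`:
`∑_{j=0}^{t−1} binom(t,j)·binom(k+l+j, l) ≡ binom(k+l+t, l) (mod 2)`. -/
theorem sum_choose_mul_choose_range_mod_two (t k l : ℕ) (ht : 1 ≤ t) (hl : l ≤ t - 1) :
    (∑ j ∈ Finset.range t, Nat.choose t j * Nat.choose (k + l + j) l) ≡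
      Nat.choose (k + l + t) l [MOD 2] := by
  set S := ∑ j ∈ Finset.range t, Nat.choose t j * Nat.choose (k + l + j) l with hS
  set C := Nat.choose (k + l + t) l with hC
  have hfull : ∑ j ∈ Finset.range (t + 1), Nat.choose t j * Nat.choose (k + l + j) l
      = S + C := by
    rw [Finset.sum_range_succ, Nat.choose_self, one_mul]
  have hswap : ∑ j ∈ Finset.range (t + 1), Nat.choose t j * Nat.choose (k + l + j) l
      = ∑ ab ∈ Finset.HasAntidiagonal.antidiagonal l, Nat.choose (k + l) ab.1 *
          ∑ j ∈ Finset.range (t + 1), Nat.choose t j * Nat.choose j ab.2 := by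
    calc ∑ j ∈ Finset.range (t + 1), Nat.choose t j * Nat.choose (k + l + j) l
        = ∑ j ∈ Finset.range (t + 1), ∑ ab ∈ Finset.HasAntidiagonal.antidiagonal l,
            Nat.choose t j * (Nat.choose (k + l) ab.1 * Nat.choose j ab.2) := by
          refine Finset.sum_congr rfl (fun j _ => ?_)
          rw [Nat.add_choose_eq (k + l) j l, Finset.mul_sum]
      _ = ∑ ab ∈ Finset.HasAntidiagonal.antidiagonal l, ∑ j ∈ Finset.range (t + 1),
            Nat.choose t j * (Nat.choose (k + l) ab.1 * Nat.choose j ab.2) :=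
          Finset.sum_comm
      _ = ∑ ab ∈ Finset.HasAntidiagonal.antidiagonal l, Nat.choose (k + l) ab.1 *
            ∑ j ∈ Finset.range (t + 1), Nat.choose t j * Nat.choose j ab.2 := by
          refine Finset.sum_congr rfl (fun ab _ => ?_)
          rw [Finset.mul_sum]
          exact Finset.sum_congr rfl (fun j _ => by ring)
  have heven : 2 ∣ ∑ j ∈ Finset.range (t + 1), Nat.choose t j * Nat.choose (k + l + j) l := by
    rw [hswap]
    refine Finset.dvd_sum (fun ab hab => ?_)
    have hb : ab.2 < t := by
      have h2 := Finset.HasAntidiagonal.antidiagonal.snd_le hab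
      omega
    exact Dvd.dvd.mul_left (aux_sum_even t ab.2 hb) _
  rw [hfull] at heven
  simp only [Nat.ModEq]
  omega
end

section
/- For all nonnegative integers t ≥ 1, k and every l ≥ 0 one has ∑_{j=0}^{t−1} binom(t, j)·binom(k+l+j, l) ≡ binom(k+l+t, l) + binom(k+l, l−t) (mod 2), where binom(a, b) is understood to be 0 when b < 0. -/
open Polynomial Finset

/-- For `t ≥ 1`, all `k ≥ 0` and every `l ≥ 0`:
`∑_{j=0}^{t−1} binom(t,j)·binom(k+l+j, l) ≡ binom(k+l+t, l) + binom(k+l, l−t) (mod 2)`,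
where `binom(a,b) = 0` when `b < 0`. -/
theorem sum_choose_mul_choose_range_mod_two' (t k l : ℕ) (ht : 1 ≤ t) :
    (∑ j ∈ Finset.range t, Nat.choose t j * Nat.choose (k + l + j) l) ≡
      Nat.choose (k + l + t) l + (if t ≤ l then Nat.choose (k + l) (l - t) else 0) [MOD 2] := by
  rw [← ZMod.natCast_eq_natCast_iff]
  push_cast
  have h2 : ((2:ℕ) : (ZMod 2)[X]) = 0 := by
    rw [← Polynomial.C_eq_natCast, show ((2:ℕ):ZMod 2) = 0 from by decide, Polynomial.C_0]
  have h2' : (2 : (ZMod 2)[X]) = 0 := by exact_mod_cast h2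
  have hx : (Polynomial.X + 1 + 1 : (ZMod 2)[X]) = Polynomial.X := by
    linear_combination h2'
  have hneg : ∀ p : (ZMod 2)[X], -p = p := by
    intro p
    linear_combination (-p) * h2'
  have hfull : (∑ j ∈ Finset.range (t+1), Polynomial.C ((t.choose j : ZMod 2)) * (Polynomial.X + 1) ^ (k + l + j))
      = (Polynomial.X + 1) ^ (k + l) * Polynomial.X ^ t := by
    have h := add_pow (Polynomial.X + 1 : (ZMod 2)[X]) 1 t
    rw [hx] at h
    rw [h, Finset.mul_sum]
    apply Finset.sum_congr rfl
    intro j hj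
    rw [Polynomial.C_eq_natCast, pow_add]
    ring
  have hpoly : (∑ j ∈ Finset.range t, Polynomial.C ((t.choose j : ZMod 2)) * (Polynomial.X + 1) ^ (k + l + j))
      = (Polynomial.X + 1) ^ (k + l) * Polynomial.X ^ t + (Polynomial.X + 1) ^ (k + l + t) := by
    rw [Finset.sum_range_succ] at hfull
    have h3 := eq_sub_of_add_eq hfull
    rw [h3, Nat.choose_self, Nat.cast_one, Polynomial.C_1, one_mul, sub_eq_add_neg, hneg]
  have hc := congrArg (fun p => Polynomial.coeff p l) hpoly
  simp only [Polynomial.finset_sum_coeff, Polynomial.coeff_C_mul, Polynomial.coeff_add,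
    Polynomial.coeff_X_add_one_pow, Polynomial.coeff_mul_X_pow'] at hc
  rw [hc]
  ring_nf
end

section
/- Fix an integer m ≥ 1 and let k ≥ 0, t ≥ 1 be integers with k + t < 2^m. Assume the matrix A_{k,t} is invertible over 𝔽₂. Then c_{k+t,t} · (A_{k,t})^{−1} = ξ_t over 𝔽₂; in particular, the row vector c_{k+t,t} · (A_{k,t})^{−1} does not depend on k. -/
open Finset

lemma sum_choose_rec (t : ℕ) (g : ℕ → ZMod 2) :
    ∑ i ∈ range (t+2), (Nat.choose (t+1) i : ZMod 2) * g i
    = ∑ i ∈ range (t+1), (Nat.choose t i : ZMod 2) * g i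
    + ∑ i ∈ range (t+1), (Nat.choose t i : ZMod 2) * g (i+1) := by
  rw [Finset.sum_range_succ' _ (t+1), Finset.sum_range_succ' (fun i => (Nat.choose t i : ZMod 2) * g i) t]
  have h0 : ∑ i ∈ range (t+1), (Nat.choose t (i+1) : ZMod 2) * g (i+1)
      = ∑ i ∈ range t, (Nat.choose t (i+1) : ZMod 2) * g (i+1) := by
    rw [Finset.sum_range_succ, Nat.choose_succ_self]
    simp
  simp only [Nat.choose_succ_succ, Nat.cast_add, add_mul, Finset.sum_add_distrib, h0]
  simp [Nat.choose_zero_right]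
  ring

lemma key1 (t j : ℕ) (h : t ≤ j) (k : ℕ) :
    ∑ i ∈ range (t+1), (Nat.choose t i : ZMod 2) * (Nat.choose (k+i+j) j : ZMod 2)
    = (Nat.choose (k+j) (j-t) : ZMod 2) := by
  induction t generalizing k with
  | zero => simp
  | succ t ih =>
    rw [sum_choose_rec t (fun i => (Nat.choose (k+i+j) j : ZMod 2))]
    have h1 : t ≤ j := Nat.le_of_succ_le h
    have e2 : ∑ i ∈ range (t+1), (Nat.choose t i : ZMod 2) * (Nat.choose (k+(i+1)+j) j : ZMod 2)
        = (Nat.choose (k+1+j) (j-t) : ZMod 2) := by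
      rw [← ih h1 (k+1)]
      apply Finset.sum_congr rfl
      intro i _
      congr 2
      ring
    rw [ih h1 k, e2]
    have hs : j - t = (j - (t+1)) + 1 := by omega
    have hk : k + 1 + j = (k + j) + 1 := by ring
    rw [hk, hs, Nat.choose_succ_succ, Nat.cast_add]
    rw [add_left_comm]
    simp [CharTwo.add_self_eq_zero]

lemma key0 (t j : ℕ) (h : j < t) (k : ℕ) :
    ∑ i ∈ range (t+1), (Nat.choose t i : ZMod 2) * (Nat.choose (k+i+j) j : ZMod 2) = 0 := by
  induction t generalizing k with
  | zero => omega
  | succ t ih =>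
    rw [sum_choose_rec t (fun i => (Nat.choose (k+i+j) j : ZMod 2))]
    have shift : ∀ k', ∑ i ∈ range (t+1), (Nat.choose t i : ZMod 2) * (Nat.choose (k'+(i+1)+j) j : ZMod 2)
        = ∑ i ∈ range (t+1), (Nat.choose t i : ZMod 2) * (Nat.choose ((k'+1)+i+j) j : ZMod 2) := by
      intro k'
      apply Finset.sum_congr rfl
      intro i _
      congr 2
      ring
    rcases Nat.lt_or_ge j t with hj | hj
    · rw [ih hj k, shift k, ih hj (k+1), add_zero]
    · have hjt : j = t := by omega
      subst hjt
      rw [key1 j j le_rfl k, shift k, key1 j j le_rfl (k+1)]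
      simp [Nat.sub_self]
      decide

lemma main_sum (t j k : ℕ) (h : j < t) :
    ∑ i ∈ range t, (Nat.choose t i : ZMod 2) * (Nat.choose (k+i+j) j : ZMod 2)
    = (Nat.choose (k+t+j) j : ZMod 2) := by
  have h0 := key0 t j h k
  rw [Finset.sum_range_succ, Nat.choose_self, Nat.cast_one, one_mul] at h0
  have := eq_neg_of_add_eq_zero_left h0
  rwa [CharTwo.neg_eq] at this

/-- For `m ≥ 1`, `k ≥ 0`, `t ≥ 1` with `k + t < 2^m`, if the matrix
`A_{k,t} = (binom(k+i+j, j) mod 2)_{0≤i,j<t}` is invertible over `𝔽₂`, then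
`c_{k+t,t} · (A_{k,t})⁻¹ = ξ_t`, where `c_{k+t,t} = (binom(k+t+j, j) mod 2)_{0≤j<t}`
and `ξ_t = (binom(t,j) mod 2)_{0≤j<t}`; in particular this row vector does not
depend on `k`. -/
theorem c_vecMul_A_inv_eq_xi (m k t : ℕ) (hm : 1 ≤ m) (ht : 1 ≤ t) (hkt : k + t < 2 ^ m)
    (hA : IsUnit (Matrix.of fun i j : Fin t =>
      ((Nat.choose (k + i.1 + j.1) j.1 : ℕ) : ZMod 2)).det) :
    Matrix.vecMul (fun j : Fin t => ((Nat.choose (k + t + j.1) j.1 : ℕ) : ZMod 2))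
      (Matrix.of fun i j : Fin t => ((Nat.choose (k + i.1 + j.1) j.1 : ℕ) : ZMod 2))⁻¹
      = fun j : Fin t => ((Nat.choose t j.1 : ℕ) : ZMod 2) := by
  set A : Matrix (Fin t) (Fin t) (ZMod 2) :=
    Matrix.of fun i j : Fin t => ((Nat.choose (k + i.1 + j.1) j.1 : ℕ) : ZMod 2) with hAdef
  have hc : Matrix.vecMul (fun j : Fin t => ((Nat.choose t j.1 : ℕ) : ZMod 2)) A
      = fun j : Fin t => ((Nat.choose (k + t + j.1) j.1 : ℕ) : ZMod 2) := by
    funext j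
    simp only [Matrix.vecMul, dotProduct, hAdef, Matrix.of_apply]
    rw [Fin.sum_univ_eq_sum_range (fun i => ((Nat.choose t i : ℕ) : ZMod 2) * ((Nat.choose (k + i + j.1) j.1 : ℕ) : ZMod 2))]
    exact main_sum t j.1 k j.2
  rw [← hc, Matrix.vecMul_vecMul, Matrix.mul_nonsing_inv A hA, Matrix.vecMul_one]
end

section
/- Fix an integer m ≥ 1 and let k ≥ 0, t ≥ 1 be integers with k + t < 2^m, and assume the matrix A_{k,t} is invertible over 𝔽₂. Let v ≥ 0 be an integer with 8·v < 2^m − t, and let w ∈ 𝔽₂^{2^m − t} be the column vector whose r-th coordinate (0-indexed, r = 0, …, 2^m − t − 1) equals 1 exactly when r ∈ {8, 16, …, 8v}. Then (d_{k+t,t} − c_{k+t,t}·(A_{k,t})^{−1}·B_{k,t}) · w ≡ binom(⌊(k+t)/8⌋ + 1 + v, v) + 1 (mod 2). -/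
open scoped Classical
private lemma zmod2_self_add (x : ZMod 2) : x + x = 0 := by
  revert x; decide

private lemma zmod2_cancel (x y : ZMod 2) : x + (y + x) = y := by
  rw [add_comm y x, ← add_assoc, zmod2_self_add, zero_add]

private lemma key_sum (t : ℕ) : ∀ n r : ℕ,
    (∑ i ∈ Finset.range (t + 1),
        ((Nat.choose t i : ℕ) : ZMod 2) * ((Nat.choose (n + i) r : ℕ) : ZMod 2))
      = if t ≤ r then ((Nat.choose n (r - t) : ℕ) : ZMod 2) else 0 := by
  induction t with
  | zero => intro n r; simp
  | succ t ih =>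
    intro n r
    set f : ℕ → ZMod 2 := fun i => ((Nat.choose (n + i) r : ℕ) : ZMod 2) with hf
    have peel : ∀ (c : ℕ → ℕ), (∑ i ∈ Finset.range (t + 2), ((c i : ℕ) : ZMod 2) * f i)
        = (∑ j ∈ Finset.range (t + 1), ((c (j+1) : ℕ) : ZMod 2) * f (j+1))
          + ((c 0 : ℕ) : ZMod 2) * f 0 := by
      intro c
      exact Finset.sum_range_succ' (fun i => ((c i : ℕ) : ZMod 2) * f i) (t+1)
    have e1 : (∑ i ∈ Finset.range (t + 2), ((Nat.choose (t+1) i : ℕ) : ZMod 2) * f i)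
        = (∑ j ∈ Finset.range (t + 1), ((Nat.choose t j : ℕ) : ZMod 2) * f (j+1))
          + (∑ i ∈ Finset.range (t + 1), ((Nat.choose t i : ℕ) : ZMod 2) * f i) := by
      rw [peel (Nat.choose (t+1))]
      have e2 : (∑ j ∈ Finset.range (t + 1), ((Nat.choose (t+1) (j+1) : ℕ) : ZMod 2) * f (j+1))
          = (∑ j ∈ Finset.range (t + 1), ((Nat.choose t j : ℕ) : ZMod 2) * f (j+1))
            + (∑ j ∈ Finset.range (t + 1), ((Nat.choose t (j+1) : ℕ) : ZMod 2) * f (j+1)) := by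
        rw [← Finset.sum_add_distrib]
        refine Finset.sum_congr rfl fun j _ => ?_
        rw [Nat.choose_succ_succ t j]
        push_cast
        ring
      rw [e2]
      have e3 : (∑ j ∈ Finset.range (t + 1), ((Nat.choose t (j+1) : ℕ) : ZMod 2) * f (j+1))
            + ((Nat.choose t 0 : ℕ) : ZMod 2) * f 0
          = ∑ i ∈ Finset.range (t + 1), ((Nat.choose t i : ℕ) : ZMod 2) * f i := by
        rw [← peel (Nat.choose t), Finset.sum_range_succ]
        simp [Nat.choose_succ_self]
      have hc0 : ((Nat.choose (t+1) 0 : ℕ) : ZMod 2) = ((Nat.choose t 0 : ℕ) : ZMod 2) := by simp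
      rw [hc0, add_assoc, e3]
    have hshift : (∑ j ∈ Finset.range (t + 1), ((Nat.choose t j : ℕ) : ZMod 2) * f (j+1))
        = ∑ j ∈ Finset.range (t + 1),
            ((Nat.choose t j : ℕ) : ZMod 2) * ((Nat.choose ((n+1) + j) r : ℕ) : ZMod 2) := by
      refine Finset.sum_congr rfl fun j _ => ?_
      have : n + (j + 1) = n + 1 + j := by omega
      rw [hf]; simp only [this]
    rw [e1, hshift, ih (n+1) r, ih n r]
    by_cases h : t + 1 ≤ r
    · have h' : t ≤ r := by omega
      simp only [if_pos h, if_pos h']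
      have hrt : r - t = (r - (t+1)) + 1 := by omega
      rw [hrt, Nat.choose_succ_succ n (r - (t+1))]
      push_cast
      rw [Nat.succ_eq_add_one, add_assoc, zmod2_self_add, add_zero]
    · simp only [if_neg h]
      by_cases h' : t ≤ r
      · have : t = r := by omega
        subst this
        simp only [if_pos h', Nat.sub_self, Nat.choose_zero_right]
        push_cast
        exact zmod2_self_add 1
      · simp [if_neg h']

private lemma zmod2_eq_of_add_eq_zero {a b : ZMod 2} (h : a + b = 0) : a = b := by
  revert a b; decide

private lemma zmod2_sub_add (x y : ZMod 2) : y - (x + y) = x := by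
  revert x y; decide

private lemma lucas2 (a c : ℕ) :
    ((Nat.choose (a + 2 * c) (2 * c) : ℕ) : ZMod 2)
      = ((Nat.choose (a / 2 + c) c : ℕ) : ZMod 2) := by
  have := @Choose.choose_modEq_choose_mod_mul_choose_div_nat (a + 2*c) (2*c) 2 ⟨Nat.prime_two⟩
  have h1 : (a + 2*c) % 2 = a % 2 := by omega
  have h2 : (2*c) % 2 = 0 := by omega
  have h3 : (a + 2*c) / 2 = a / 2 + c := by omega
  have h4 : (2*c) / 2 = c := by omega
  rw [h1, h2, h3, h4, Nat.choose_zero_right] at this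
  have := (ZMod.natCast_eq_natCast_iff _ _ _).mpr this
  rw [this]
  push_cast
  ring

private lemma lucas8 (a b : ℕ) :
    ((Nat.choose (a + 8 * b) (8 * b) : ℕ) : ZMod 2)
      = ((Nat.choose (a / 8 + b) b : ℕ) : ZMod 2) := by
  have e1 : a + 8 * b = a + 2 * (4 * b) := by ring
  have e2 : (8 : ℕ) * b = 2 * (4 * b) := by ring
  rw [e1, e2, lucas2 a (4*b)]
  have e3 : a / 2 + 4 * b = a / 2 + 2 * (2 * b) := by ring
  have e4 : (4 : ℕ) * b = 2 * (2 * b) := by ring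
  rw [e3, e4, lucas2 (a/2) (2*b)]
  have e5 : a / 2 / 2 + 2 * b = a / 2 / 2 + 2 * b := rfl
  rw [lucas2 (a/2/2) b]
  have : a / 2 / 2 / 2 = a / 8 := by omega
  rw [this]

private lemma hockey (q : ℕ) : ∀ v : ℕ,
    (∑ s ∈ Finset.range (v + 1), Nat.choose (q + s) s) = Nat.choose (q + 1 + v) v := by
  intro v
  induction v with
  | zero => simp
  | succ v ih =>
    rw [Finset.sum_range_succ, ih]
    have h1 : q + 1 + (v + 1) = (q + 1 + v) + 1 := by omega
    rw [h1, Nat.choose_succ_succ (q + 1 + v) v]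
    have h2 : q + (v + 1) = q + 1 + v := by omega
    rw [h2]
/-- For `m ≥ 1`, `k ≥ 0`, `t ≥ 1` with `k + t < 2^m` and `A_{k,t}` invertible over
`𝔽₂`, and `v ≥ 0` with `8v < 2^m − t`: if `w ∈ 𝔽₂^{2^m−t}` is the column vector whose
`r`-th coordinate is `1` exactly when `r ∈ {8, 16, …, 8v}`, then
`(d_{k+t,t} − c_{k+t,t}·(A_{k,t})⁻¹·B_{k,t}) · w ≡ binom(⌊(k+t)/8⌋+1+v, v) + 1 (mod 2)`. -/
theorem d_sub_cAinvB_dotProduct (m k t v : ℕ) (hm : 1 ≤ m) (ht : 1 ≤ t)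
    (hkt : k + t < 2 ^ m) (hv : 8 * v < 2 ^ m - t)
    (hA : IsUnit (Matrix.of fun i j : Fin t =>
      ((Nat.choose (k + i.1 + j.1) j.1 : ℕ) : ZMod 2)).det) :
    dotProduct
      ((fun j : Fin (2 ^ m - t) =>
          ((Nat.choose (k + t + (t + j.1)) (t + j.1) : ℕ) : ZMod 2))
        - Matrix.vecMul
            (Matrix.vecMul (fun j : Fin t => ((Nat.choose (k + t + j.1) j.1 : ℕ) : ZMod 2))
              (Matrix.of fun i j : Fin t =>
                ((Nat.choose (k + i.1 + j.1) j.1 : ℕ) : ZMod 2))⁻¹)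
            (Matrix.of fun (i : Fin t) (j : Fin (2 ^ m - t)) =>
              ((Nat.choose (k + i.1 + (t + j.1)) (t + j.1) : ℕ) : ZMod 2)))
      (fun r : Fin (2 ^ m - t) => if ∃ s ∈ Finset.Icc 1 v, r.1 = 8 * s then 1 else 0)
      = ((Nat.choose ((k + t) / 8 + 1 + v) v : ℕ) : ZMod 2) + 1 := by
  set N := 2 ^ m - t with hN
  set A : Matrix (Fin t) (Fin t) (ZMod 2) := Matrix.of fun i j : Fin t =>
      ((Nat.choose (k + i.1 + j.1) j.1 : ℕ) : ZMod 2) with hA'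
  set B : Matrix (Fin t) (Fin N) (ZMod 2) := Matrix.of fun (i : Fin t) (j : Fin N) =>
      ((Nat.choose (k + i.1 + (t + j.1)) (t + j.1) : ℕ) : ZMod 2) with hB'
  set c : Fin t → ZMod 2 := fun j => ((Nat.choose (k + t + j.1) j.1 : ℕ) : ZMod 2) with hc'
  set d : Fin N → ZMod 2 := fun j : Fin N =>
      ((Nat.choose (k + t + (t + j.1)) (t + j.1) : ℕ) : ZMod 2) with hd'
  set ξ : Fin t → ZMod 2 := fun j => ((Nat.choose t j.1 : ℕ) : ZMod 2) with hξ'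
  -- Step 1 : ξ ⬝ A = c
  have hxiA : Matrix.vecMul ξ A = c := by
    funext j
    have hsum : Matrix.vecMul ξ A j
        = ∑ i ∈ Finset.range t,
            ((Nat.choose t i : ℕ) : ZMod 2) * ((Nat.choose ((k + j.1) + i) j.1 : ℕ) : ZMod 2) := by
      rw [Matrix.vecMul, dotProduct]
      rw [← Fin.sum_univ_eq_sum_range
        (fun i => ((Nat.choose t i : ℕ) : ZMod 2) * ((Nat.choose ((k + j.1) + i) j.1 : ℕ) : ZMod 2)) t]
      refine Finset.sum_congr rfl fun i _ => ?_
      have : k + j.1 + i.1 = k + i.1 + j.1 := by omega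
      simp [hξ', hA', Matrix.transpose_apply, this]
    have hkey := key_sum t (k + j.1) j.1
    rw [Finset.sum_range_succ] at hkey
    have hj : ¬ (t ≤ j.1) := by exact Nat.not_le.mpr j.2
    rw [if_neg hj] at hkey
    rw [hsum]
    have := zmod2_eq_of_add_eq_zero hkey
    rw [this]
    have e : k + j.1 + t = k + t + j.1 := by omega
    simp [hc', e]
  -- Step 2 : c ⬝ A⁻¹ = ξ
  have hcAinv : Matrix.vecMul c A⁻¹ = ξ := by
    rw [← hxiA, Matrix.vecMul_vecMul, Matrix.mul_nonsing_inv _ hA, Matrix.vecMul_one]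
  -- Step 3 : d - ξ ⬝ B = row of C(k+t+j, j)
  have hvec : (d - Matrix.vecMul ξ B)
      = fun j : Fin N => ((Nat.choose (k + t + j.1) j.1 : ℕ) : ZMod 2) := by
    funext j
    have hsum : Matrix.vecMul ξ B j
        = ∑ i ∈ Finset.range t,
            ((Nat.choose t i : ℕ) : ZMod 2)
              * ((Nat.choose ((k + (t + j.1)) + i) (t + j.1) : ℕ) : ZMod 2) := by
      rw [Matrix.vecMul, dotProduct]
      rw [← Fin.sum_univ_eq_sum_range
        (fun i => ((Nat.choose t i : ℕ) : ZMod 2)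
          * ((Nat.choose ((k + (t + j.1)) + i) (t + j.1) : ℕ) : ZMod 2)) t]
      refine Finset.sum_congr rfl fun i _ => ?_
      have : k + (t + j.1) + i.1 = k + i.1 + (t + j.1) := by omega
      simp [hξ', hB', this]
    have hkey := key_sum t (k + (t + j.1)) (t + j.1)
    rw [Finset.sum_range_succ] at hkey
    have hj : t ≤ t + j.1 := Nat.le_add_right t j.1
    rw [if_pos hj] at hkey
    have e1 : t + j.1 - t = j.1 := by omega
    have e3 : k + (t + j.1) + t = k + t + (t + j.1) := by omega
    have e2 : k + (t + j.1) = k + t + j.1 := by omega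
    rw [e3] at hkey
    rw [e2] at hkey hsum
    rw [e1, Nat.choose_self, Nat.cast_one, one_mul] at hkey
    rw [Pi.sub_apply, hsum]
    simp only [hd']
    rw [eq_sub_of_add_eq hkey]
    have hfin : ∀ a b : ZMod 2, a - (b - a) = b := by decide
    exact hfin _ _
  rw [hcAinv, hvec]
  -- Step 4 : compute the dot product
  rw [dotProduct]
  have hsum2 : (∑ r : Fin N,
      ((Nat.choose (k + t + r.1) r.1 : ℕ) : ZMod 2)
        * (if ∃ s ∈ Finset.Icc 1 v, r.1 = 8 * s then 1 else 0))
      = ∑ r ∈ Finset.range N,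
        ((Nat.choose (k + t + r) r : ℕ) : ZMod 2)
          * (if ∃ s ∈ Finset.Icc 1 v, r = 8 * s then 1 else 0) :=
    Fin.sum_univ_eq_sum_range (fun r =>
      ((Nat.choose (k + t + r) r : ℕ) : ZMod 2)
        * (if ∃ s ∈ Finset.Icc 1 v, r = 8 * s then 1 else 0)) N
  rw [hsum2]
  set S : Finset ℕ := (Finset.Icc 1 v).image (fun s => 8 * s) with hS
  have hterm : ∀ r ∈ Finset.range N,
      ((Nat.choose (k + t + r) r : ℕ) : ZMod 2)
        * (if ∃ s ∈ Finset.Icc 1 v, r = 8 * s then 1 else 0)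
      = if r ∈ S then ((Nat.choose (k + t + r) r : ℕ) : ZMod 2) else 0 := by
    intro r _
    have hiff : (∃ s ∈ Finset.Icc 1 v, r = 8 * s) ↔ r ∈ S := by
      simp only [hS, Finset.mem_image]
      constructor
      · rintro ⟨s, hs, hr⟩; exact ⟨s, hs, hr.symm⟩
      · rintro ⟨s, hs, hr⟩; exact ⟨s, hs, hr.symm⟩
    by_cases h : r ∈ S
    · rw [if_pos (hiff.mpr h), if_pos h, mul_one]
    · rw [if_neg (fun hx => h (hiff.mp hx)), if_neg h, mul_zero]
  rw [Finset.sum_congr rfl hterm, Finset.sum_ite_mem]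
  have hsub : S ⊆ Finset.range N := by
    intro x hx
    simp only [hS, Finset.mem_image, Finset.mem_Icc] at hx
    obtain ⟨s, ⟨hs1, hs2⟩, hr⟩ := hx
    rw [Finset.mem_range, ← hr]
    have : 8 * s ≤ 8 * v := by omega
    omega
  rw [Finset.inter_eq_right.mpr hsub]
  rw [Finset.sum_image (fun a _ b _ h => by omega : ∀ x ∈ Finset.Icc 1 v, ∀ y ∈ Finset.Icc 1 v,
    8 * x = 8 * y → x = y)]
  have hlucas : ∀ s ∈ Finset.Icc 1 v,
      ((Nat.choose (k + t + 8 * s) (8 * s) : ℕ) : ZMod 2)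
        = ((Nat.choose ((k + t) / 8 + s) s : ℕ) : ZMod 2) := fun s _ => lucas8 (k + t) s
  rw [Finset.sum_congr rfl hlucas]
  -- Step 5 : hockey stick
  have hins : Finset.range (v + 1) = insert 0 (Finset.Icc 1 v) := by
    ext x
    simp only [Finset.mem_range, Finset.mem_insert, Finset.mem_Icc]
    omega
  have h0 : (0 : ℕ) ∉ Finset.Icc 1 v := by simp
  have hr : (∑ s ∈ Finset.range (v + 1), ((Nat.choose ((k + t) / 8 + s) s : ℕ) : ZMod 2))
      = 1 + ∑ s ∈ Finset.Icc 1 v, ((Nat.choose ((k + t) / 8 + s) s : ℕ) : ZMod 2) := by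
    rw [hins, Finset.sum_insert h0]
    simp
  have hss : (∑ s ∈ Finset.range (v + 1), ((Nat.choose ((k + t) / 8 + s) s : ℕ) : ZMod 2))
      = ((Nat.choose ((k + t) / 8 + 1 + v) v : ℕ) : ZMod 2) := by
    rw [← Nat.cast_sum, hockey ((k + t) / 8) v]
  rw [hss] at hr
  have : (∑ s ∈ Finset.Icc 1 v, ((Nat.choose ((k + t) / 8 + s) s : ℕ) : ZMod 2))
      = ((Nat.choose ((k + t) / 8 + 1 + v) v : ℕ) : ZMod 2) - 1 := by
    rw [hr]; ring
  rw [this]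
  have hfin2 : ∀ x : ZMod 2, x - 1 = x + 1 := by decide
  exact hfin2 _
end

section
/- For every integer r ≥ 0, the number of pairs (i, j) of integers with 0 ≤ i < 2^r, 0 ≤ j < 2^r and binom(i+1+j, j) odd equals 3^r; in particular it equals the number of pairs (i, j) with 0 ≤ i, j < 2^r and binom(i+j, j) odd. -/
open Finset Nat

lemma odd_choose_rec (n k : ℕ) :
    Odd (Nat.choose n k) ↔ Odd (Nat.choose (n % 2) (k % 2)) ∧ Odd (Nat.choose (n / 2) (k / 2)) := by
  have h := Choose.choose_modEq_choose_mod_mul_choose_div_nat (p := 2) (n := n) (k := k)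
  rw [← Nat.odd_mul]
  rw [Nat.odd_iff, Nat.odd_iff, h]

lemma key1_s17 (a c b1 b2 : ℕ) (hb1 : b1 < 2) (hb2 : b2 < 2) :
    Odd (Nat.choose (2 * a + b1 + (2 * c + b2)) (2 * c + b2)) ↔
      (b1 = 0 ∨ b2 = 0) ∧ Odd (Nat.choose (a + c) c) := by
  rw [odd_choose_rec]
  interval_cases b1 <;> interval_cases b2
  · rw [show (2*a+0+(2*c+0))%2 = 0 from by omega, show (2*c+0)%2 = 0 from by omega,
        show (2*a+0+(2*c+0))/2 = a+c from by omega, show (2*c+0)/2 = c from by omega]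
    simp [Nat.odd_iff]
  · rw [show (2*a+0+(2*c+1))%2 = 1 from by omega, show (2*c+1)%2 = 1 from by omega,
        show (2*a+0+(2*c+1))/2 = a+c from by omega, show (2*c+1)/2 = c from by omega]
    simp [Nat.odd_iff]
  · rw [show (2*a+1+(2*c+0))%2 = 1 from by omega, show (2*c+0)%2 = 0 from by omega,
        show (2*a+1+(2*c+0))/2 = a+c from by omega, show (2*c+0)/2 = c from by omega]
    simp [Nat.odd_iff]
  · rw [show (2*a+1+(2*c+1))%2 = 0 from by omega, show (2*c+1)%2 = 1 from by omega]
    simp [Nat.odd_iff]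

lemma sum_range_two_mul (n : ℕ) (f : ℕ → ℕ) :
    ∑ i ∈ range (2 * n), f i = ∑ i ∈ range n, (f (2 * i) + f (2 * i + 1)) := by
  induction n with
  | zero => simp
  | succ n ih =>
    rw [show 2 * (n + 1) = (2 * n + 1) + 1 from by omega, sum_range_succ, sum_range_succ,
      sum_range_succ, ih]
    omega

lemma k00 (a c : ℕ) : Odd (Nat.choose (2*a + 2*c) (2*c)) ↔ Odd (Nat.choose (a+c) c) := by
  simpa using key1_s17 a c 0 0 (by omega) (by omega)
lemma k01 (a c : ℕ) : Odd (Nat.choose (2*a + (2*c+1)) (2*c+1)) ↔ Odd (Nat.choose (a+c) c) := by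
  simpa using key1_s17 a c 0 1 (by omega) (by omega)
lemma k10 (a c : ℕ) : Odd (Nat.choose (2*a+1 + 2*c) (2*c)) ↔ Odd (Nat.choose (a+c) c) := by
  simpa using key1_s17 a c 1 0 (by omega) (by omega)
lemma k11 (a c : ℕ) : ¬ Odd (Nat.choose (2*a+1 + (2*c+1)) (2*c+1)) := by
  have := key1_s17 a c 1 1 (by omega) (by omega)
  simp at this; simpa using this
lemma s00 (a c : ℕ) : Odd (Nat.choose (2*a + 1 + 2*c) (2*c)) ↔ Odd (Nat.choose (a+c) c) :=
  k10 a c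
lemma s01 (a c : ℕ) : ¬ Odd (Nat.choose (2*a + 1 + (2*c+1)) (2*c+1)) := k11 a c
lemma s10 (a c : ℕ) : Odd (Nat.choose (2*a+1 + 1 + 2*c) (2*c)) ↔ Odd (Nat.choose (a+1+c) c) := by
  have := key1_s17 (a+1) c 0 0 (by omega) (by omega)
  rw [show 2*(a+1) + 0 + (2*c+0) = 2*a+1+1+2*c from by omega] at this
  simpa using this
lemma s11 (a c : ℕ) :
    Odd (Nat.choose (2*a+1 + 1 + (2*c+1)) (2*c+1)) ↔ Odd (Nat.choose (a+1+c) c) := by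
  have := key1_s17 (a+1) c 0 1 (by omega) (by omega)
  rw [show 2*(a+1) + 0 + (2*c+1) = 2*a+1+1+(2*c+1) from by omega] at this
  simpa using this

lemma main (r : ℕ) :
    (∑ i ∈ range (2^r), ∑ j ∈ range (2^r),
      if Odd (Nat.choose (i+1+j) j) then 1 else 0) = 3^r ∧
    (∑ i ∈ range (2^r), ∑ j ∈ range (2^r),
      if Odd (Nat.choose (i+j) j) then 1 else 0) = 3^r := by
  induction r with
  | zero => decide
  | succ r ih =>
    obtain ⟨hS, hU⟩ := ih
    have e : (2:ℕ)^(r+1) = 2 * 2^r := by ring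
    constructor
    · rw [e, sum_range_two_mul]
      simp only [sum_range_two_mul]
      calc ∑ a ∈ range (2^r),
            ((∑ c ∈ range (2^r),
              ((if Odd (Nat.choose (2*a+1+2*c) (2*c)) then 1 else 0) +
               (if Odd (Nat.choose (2*a+1+(2*c+1)) (2*c+1)) then 1 else 0))) +
             (∑ c ∈ range (2^r),
              ((if Odd (Nat.choose (2*a+1+1+2*c) (2*c)) then 1 else 0) +
               (if Odd (Nat.choose (2*a+1+1+(2*c+1)) (2*c+1)) then 1 else 0))))
          = ∑ a ∈ range (2^r), ∑ c ∈ range (2^r),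
              ((if Odd (Nat.choose (a+c) c) then 1 else 0) +
               2 * (if Odd (Nat.choose (a+1+c) c) then 1 else 0)) := by
            refine sum_congr rfl fun a _ => ?_
            rw [← Finset.sum_add_distrib]
            refine sum_congr rfl fun c _ => ?_
            rw [if_congr (s00 a c) rfl rfl, if_neg (s01 a c),
              if_congr (s10 a c) rfl rfl, if_congr (s11 a c) rfl rfl]
            split_ifs <;> omega
        _ = 3^(r+1) := by
            simp only [Finset.sum_add_distrib, ← Finset.mul_sum, ← Finset.sum_mul]
            rw [hU]
            rw [show (fun a => ∑ c ∈ range (2^r),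
              (if Odd (Nat.choose (a+1+c) c) then 1 else 0)) = fun a => ∑ c ∈ range (2^r),
              (if Odd (Nat.choose (a+1+c) c) then 1 else 0) from rfl]
            rw [hS]; ring
    · rw [e, sum_range_two_mul]
      simp only [sum_range_two_mul]
      calc ∑ a ∈ range (2^r),
            ((∑ c ∈ range (2^r),
              ((if Odd (Nat.choose (2*a+2*c) (2*c)) then 1 else 0) +
               (if Odd (Nat.choose (2*a+(2*c+1)) (2*c+1)) then 1 else 0))) +
             (∑ c ∈ range (2^r),
              ((if Odd (Nat.choose (2*a+1+2*c) (2*c)) then 1 else 0) +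
               (if Odd (Nat.choose (2*a+1+(2*c+1)) (2*c+1)) then 1 else 0))))
          = ∑ a ∈ range (2^r), ∑ c ∈ range (2^r),
              (3 * (if Odd (Nat.choose (a+c) c) then 1 else 0)) := by
            refine sum_congr rfl fun a _ => ?_
            rw [← Finset.sum_add_distrib]
            refine sum_congr rfl fun c _ => ?_
            rw [if_congr (k00 a c) rfl rfl, if_congr (k01 a c) rfl rfl,
              if_congr (k10 a c) rfl rfl, if_neg (k11 a c)]
            split_ifs <;> omega
        _ = 3^(r+1) := by
            simp only [← Finset.mul_sum]
            rw [hU]; ring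

/-- For every `r ≥ 0`, the number of pairs `(i,j)` with `0 ≤ i, j < 2^r` and
`binom(i+1+j, j)` odd equals `3^r`; in particular it equals the number of pairs
with `binom(i+j, j)` odd. -/
theorem count_odd_choose_shifted (r : ℕ) :
    ((Finset.range (2 ^ r) ×ˢ Finset.range (2 ^ r)).filter
      (fun p => Odd (Nat.choose (p.1 + 1 + p.2) p.2))).card = 3 ^ r ∧
    ((Finset.range (2 ^ r) ×ˢ Finset.range (2 ^ r)).filter
      (fun p => Odd (Nat.choose (p.1 + 1 + p.2) p.2))).card =
    ((Finset.range (2 ^ r) ×ˢ Finset.range (2 ^ r)).filter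
      (fun p => Odd (Nat.choose (p.1 + p.2) p.2))).card := by
  obtain ⟨hS, hU⟩ := main r
  have c1 : ((Finset.range (2 ^ r) ×ˢ Finset.range (2 ^ r)).filter
      (fun p => Odd (Nat.choose (p.1 + 1 + p.2) p.2))).card
      = ∑ i ∈ range (2^r), ∑ j ∈ range (2^r),
        if Odd (Nat.choose (i+1+j) j) then 1 else 0 := by
    rw [Finset.card_filter, Finset.sum_product]
  have c2 : ((Finset.range (2 ^ r) ×ˢ Finset.range (2 ^ r)).filter
      (fun p => Odd (Nat.choose (p.1 + p.2) p.2))).card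
      = ∑ i ∈ range (2^r), ∑ j ∈ range (2^r),
        if Odd (Nat.choose (i+j) j) then 1 else 0 := by
    rw [Finset.card_filter, Finset.sum_product]
  refine ⟨by rw [c1, hS], by rw [c1, c2, hS, hU]⟩
end

section
/- Let α be Levin's normal number in base 2. For every integer m ≥ 1, all integers i, k with 0 ≤ i < 2^m, 0 ≤ k < 2^m and k + i ≤ 2^m, every integer B with 0 ≤ B < 2^{2^m − i}, and every integer c with 0 ≤ c < 2^i, there exists exactly one integer n with B·2^i ≤ n < B·2^i + 2^i such that {2^{n_m + 2^m·n + k}·α} ∈ [c/2^i, (c+1)/2^i). -/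
open scoped Classical

namespace LevinProof

lemma levinN_one : levinN 1 = 0 := by simp [levinN]

lemma levinN_succ {m : ℕ} (hm : 1 ≤ m) :
    levinN (m + 1) = levinN m + 2 ^ m * 2 ^ 2 ^ m := by
  unfold levinN; rw [Finset.sum_Ico_succ_top hm]

lemma levinN_mono : Monotone levinN := fun a b h =>
  Finset.sum_le_sum_of_subset (Finset.Ico_subset_Ico le_rfl h)

lemma le_levinN {m : ℕ} (hm : 2 ≤ m) : m ≤ levinN m := by
  have h1 : 2 ^ (m - 1) * 2 ^ 2 ^ (m - 1) ≤ levinN m := by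
    apply Finset.single_le_sum (f := fun i => 2 ^ i * 2 ^ 2 ^ i)
    · intros; positivity
    · simp [Finset.mem_Ico]; omega
  have h2 : m - 1 < 2 ^ (m - 1) := Nat.lt_two_pow_self
  have h3 : 2 ^ (m-1) ≤ 2 ^ (m-1) * 2 ^ 2 ^ (m-1) := Nat.le_mul_of_pos_right _ (by positivity)
  omega

lemma lt_levinN (p : ℕ) : p < levinN (p + 2) := by
  have := le_levinN (m := p + 2) (by omega)
  omega

def blk (p : ℕ) : ℕ := Nat.findGreatest (fun m => levinN m ≤ p) (p + 1)

lemma blk_ge_one (p : ℕ) : 1 ≤ blk p :=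
  Nat.le_findGreatest (by omega) (by simp [levinN_one])

lemma levinN_blk_le (p : ℕ) : levinN (blk p) ≤ p := by
  have : (fun m => levinN m ≤ p) (Nat.findGreatest (fun m => levinN m ≤ p) (p + 1)) :=
    Nat.findGreatest_spec (P := fun m => levinN m ≤ p) (m := 1) (n := p + 1) (by omega) (by simp [levinN_one])
  exact this

lemma lt_levinN_blk_succ (p : ℕ) : p < levinN (blk p + 1) := by
  by_contra h
  push_neg at h
  rcases le_or_gt (blk p + 1) (p + 1) with hb | hb
  · exact Nat.findGreatest_is_greatest (lt_add_one _) hb h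
  · have hle : blk p ≤ p + 1 := Nat.findGreatest_le _
    have heq : blk p = p + 1 := by omega
    have h2 : p < levinN (p + 1 + 1) := lt_levinN p
    rw [heq] at h
    omega

lemma blk_eq {m p : ℕ} (hm : 1 ≤ m) (h1 : levinN m ≤ p) (h2 : p < levinN (m + 1)) :
    blk p = m := by
  have hmp : m ≤ p + 1 := by
    rcases Nat.lt_or_ge m 2 with h | h
    · omega
    · have := le_levinN h; omega
  have hge : m ≤ blk p := Nat.le_findGreatest hmp h1
  have hle : blk p ≤ m := by
    by_contra h
    push_neg at h
    have h3 : m + 1 ≤ blk p := h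
    have := levinN_mono h3
    have := levinN_blk_le p
    omega
  omega

noncomputable def dig (p : ℕ) : ℕ :=
  levinD (blk p) ((p - levinN (blk p)) % 2 ^ blk p) ((p - levinN (blk p)) / 2 ^ blk p)

lemma dig_eq {m n k : ℕ} (hm : 1 ≤ m) (hn : n < 2 ^ 2 ^ m) (hk : k < 2 ^ m) :
    dig (levinN m + (2 ^ m * n + k)) = levinD m k n := by
  set p := levinN m + (2 ^ m * n + k) with hp
  have hlt : 2 ^ m * n + k < 2 ^ m * 2 ^ 2 ^ m := by
    calc 2 ^ m * n + k < 2 ^ m * n + 2 ^ m := by omega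
    _ = 2 ^ m * (n + 1) := by ring
    _ ≤ 2 ^ m * 2 ^ 2 ^ m := Nat.mul_le_mul_left _ (by omega)
  have hb : blk p = m := by
    apply blk_eq hm (by omega)
    rw [levinN_succ hm]; omega
  unfold dig
  rw [hb]
  have h1 : p - levinN m = 2 ^ m * n + k := by omega
  rw [h1, Nat.mul_add_mod, Nat.mod_eq_of_lt hk]
  congr 1
  rw [Nat.mul_add_div (by positivity), Nat.div_eq_of_lt hk]
  omega

lemma levinD_le_one (m k n : ℕ) : levinD m k n ≤ 1 :=
  Nat.lt_succ_iff.mp (Nat.mod_lt _ (by norm_num))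

lemma dig_le_one (p : ℕ) : dig p ≤ 1 := levinD_le_one _ _ _

lemma levinD_zero (m k : ℕ) : levinD m k 0 = 0 := by
  simp [levinD]


lemma dig_term_le (N t : ℕ) : (dig (N + t) : ℝ) / 2 ^ (t + 1) ≤ 1 / 2 / 2 ^ t := by
  have h1 : (dig (N + t) : ℝ) ≤ 1 := by exact_mod_cast dig_le_one _
  have h2 : (1:ℝ) / 2 / 2 ^ t = 1 / 2 ^ (t + 1) := by
    rw [pow_succ]; ring
  rw [h2]
  gcongr

lemma summable_dig (N : ℕ) : Summable (fun t => (dig (N + t) : ℝ) / 2 ^ (t + 1)) :=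
  Summable.of_nonneg_of_le (fun t => by positivity) (dig_term_le N)
    (summable_geometric_two' 1)

noncomputable def valA (N : ℕ) : ℝ := ∑' t, (dig (N + t) : ℝ) / 2 ^ (t + 1)

lemma sum_Ico_block (N A B : ℕ) (f : ℕ → ℝ) :
    ∑ p ∈ Finset.Ico N (N + A * B), f p =
      ∑ n ∈ Finset.range A, ∑ k ∈ Finset.range B, f (N + (B * n + k)) := by
  induction A with
  | zero => simp
  | succ A ih =>
    rw [Finset.sum_range_succ, ← ih]
    have h1 : N + (A + 1) * B = (N + A * B) + B := by ring
    rw [h1, ← Finset.sum_Ico_consecutive f (show N ≤ N + A * B by omega) (show N + A * B ≤ N + A * B + B by omega)]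
    congr 1
    rw [Finset.sum_Ico_eq_sum_range]
    have h2 : N + A * B + B - (N + A * B) = B := by omega
    rw [h2]
    apply Finset.sum_congr rfl
    intro k _
    congr 1
    ring

lemma alpha_eq : levinAlpha = ∑' p, (dig p : ℝ) / 2 ^ (p + 1) := by
  set g : ℕ → ℝ := fun p => (dig p : ℝ) / 2 ^ (p + 1) with hg
  have hsum : Summable g := by
    have := summable_dig 0
    simpa using this
  set x : ℝ := ∑' p, g p with hx
  set T : ℕ → ℝ := fun m => ∑ n ∈ Finset.range (2 ^ 2 ^ (m + 1)), ∑ k ∈ Finset.range (2 ^ (m + 1)),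
    (levinD (m + 1) k n : ℝ) / 2 ^ (levinN (m + 1) + 2 ^ (m + 1) * n + k + 1) with hT
  have hTm : ∀ m, T m = ∑ p ∈ Finset.Ico (levinN (m + 1)) (levinN (m + 2)), g p := by
    intro m
    have h1 : levinN (m + 2) = levinN (m + 1) + 2 ^ 2 ^ (m + 1) * 2 ^ (m + 1) := by
      rw [levinN_succ (by omega)]; ring
    rw [h1, sum_Ico_block]
    apply Finset.sum_congr rfl
    intro n hn
    apply Finset.sum_congr rfl
    intro k hk
    simp only [Finset.mem_range] at hn hk
    simp only [hg]
    rw [dig_eq (by omega) hn hk]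
    congr 2
    omega
  have hpartial : ∀ M, ∑ m ∈ Finset.range M, T m = ∑ p ∈ Finset.range (levinN (M + 1)), g p := by
    intro M
    induction M with
    | zero => simp [levinN_one]
    | succ M ih =>
      rw [Finset.sum_range_succ, ih, hTm]
      rw [Finset.range_eq_Ico, Finset.range_eq_Ico]
      exact Finset.sum_Ico_consecutive g (Nat.zero_le _)
        (levinN_mono (show M + 1 ≤ M + 1 + 1 by omega))
  have htendN : Filter.Tendsto (fun M => levinN (M + 1)) Filter.atTop Filter.atTop := by
    apply Filter.tendsto_atTop_mono (f := id) _ Filter.tendsto_id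
    intro M
    show M ≤ levinN (M + 1)
    rcases Nat.lt_or_ge M 1 with h | h
    · have : M = 0 := by omega
      simp [this, levinN_one]
    · exact le_trans (by omega) (le_levinN (by omega))
  have htend : Filter.Tendsto (fun M => ∑ m ∈ Finset.range M, T m) Filter.atTop (nhds x) := by
    simp only [hpartial]
    exact (hsum.hasSum.tendsto_sum_nat).comp htendN
  have hTnonneg : ∀ m, 0 ≤ T m := by
    intro m
    apply Finset.sum_nonneg
    intro n _
    apply Finset.sum_nonneg
    intro k _
    positivity
  have : HasSum T x := (hasSum_iff_tendsto_nat_of_nonneg hTnonneg x).mpr htend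
  rw [levinAlpha]
  exact this.tsum_eq

lemma valA_nonneg (N : ℕ) : 0 ≤ valA N :=
  tsum_nonneg (fun t => by positivity)

lemma exists_dig_zero (N : ℕ) : ∃ t, dig (N + t) = 0 := by
  refine ⟨levinN (N + 2) - N, ?_⟩
  have h1 : N + (levinN (N + 2) - N) = levinN (N + 2) := by
    have := lt_levinN N; omega
  rw [h1]
  have h2 : levinN (N + 2) = levinN (N + 2) + (2 ^ (N + 2) * 0 + 0) := by ring
  rw [h2, dig_eq (by omega) (by positivity) (by positivity)]
  exact levinD_zero _ _

lemma valA_lt_one (N : ℕ) : valA N < 1 := by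
  obtain ⟨t0, ht0⟩ := exists_dig_zero N
  have h1 : (1 : ℝ) = ∑' t : ℕ, (1 : ℝ) / 2 / 2 ^ t := (tsum_geometric_two' 1).symm
  rw [valA, h1]
  apply Summable.tsum_lt_tsum (i := t0)
  · exact dig_term_le N
  · rw [ht0]
    norm_num
  · exact summable_dig N
  · exact summable_geometric_two' 1

lemma valA_succ (N : ℕ) : Int.fract (2 ^ N * levinAlpha) = valA N := by
  have hsum : Summable (fun p => (dig p : ℝ) / 2 ^ (p + 1)) := by
    have := summable_dig 0; simpa using this
  rw [alpha_eq, ← tsum_mul_left]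
  have hsum2 : Summable (fun p => (2:ℝ) ^ N * ((dig p : ℝ) / 2 ^ (p + 1))) := hsum.mul_left _
  rw [← Summable.sum_add_tsum_nat_add N hsum2]
  have htail : ∀ t : ℕ, (2:ℝ) ^ N * ((dig (t + N) : ℝ) / 2 ^ (t + N + 1)) =
      (dig (N + t) : ℝ) / 2 ^ (t + 1) := by
    intro t
    rw [add_comm t N]
    rw [show N + t + 1 = N + (t + 1) by ring, pow_add]
    field_simp
  have hfront : ∃ Z : ℕ, ∑ p ∈ Finset.range N, (2:ℝ) ^ N * ((dig p : ℝ) / 2 ^ (p + 1)) = Z := by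
    refine ⟨∑ p ∈ Finset.range N, dig p * 2 ^ (N - p - 1), ?_⟩
    push_cast
    apply Finset.sum_congr rfl
    intro p hp
    simp only [Finset.mem_range] at hp
    have h2 : (2:ℝ) ^ N = 2 ^ (p + 1) * 2 ^ (N - p - 1) := by
      rw [← pow_add]; congr 1; omega
    rw [h2]
    field_simp
  obtain ⟨Z, hZ⟩ := hfront
  rw [hZ]
  have : ∑' t : ℕ, (2:ℝ) ^ N * ((dig (t + N) : ℝ) / 2 ^ (t + N + 1)) = valA N := by
    rw [valA]
    exact tsum_congr htail
  rw [this]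
  rw [add_comm, Int.fract_add_natCast]
  exact Int.fract_eq_self.mpr ⟨valA_nonneg N, valA_lt_one N⟩


/-- The number formed by the `i` binary digits starting at position `N`. -/
noncomputable def Dg (N i : ℕ) : ℕ := ∑ t ∈ Finset.range i, dig (N + t) * 2 ^ (i - 1 - t)

lemma bits_sum_lt {i : ℕ} (e : ℕ → ℕ) (he : ∀ s, e s ≤ 1) :
    ∑ s ∈ Finset.range i, e s * 2 ^ s < 2 ^ i := by
  induction i with
  | zero => simp
  | succ i ih =>
    rw [Finset.sum_range_succ]
    have h1 := he i
    have h2 : e i * 2 ^ i ≤ 2 ^ i := by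
      calc e i * 2 ^ i ≤ 1 * 2 ^ i := Nat.mul_le_mul_right _ h1
      _ = 2 ^ i := one_mul _
    have : (2:ℕ) ^ (i + 1) = 2 ^ i + 2 ^ i := by rw [pow_succ]; ring
    omega

lemma Dg_reflect (N i : ℕ) :
    Dg N i = ∑ s ∈ Finset.range i, dig (N + (i - 1 - s)) * 2 ^ s := by
  rw [Dg, ← Finset.sum_range_reflect (fun s => dig (N + (i - 1 - s)) * 2 ^ s) i]
  apply Finset.sum_congr rfl
  intro j hj
  simp only [Finset.mem_range] at hj
  have h1 : i - 1 - (i - 1 - j) = j := by omega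
  rw [h1]

lemma Dg_lt (N i : ℕ) : Dg N i < 2 ^ i := by
  rw [Dg_reflect]
  exact bits_sum_lt _ (fun s => dig_le_one _)

lemma bits_sum_inj {i : ℕ} (e e' : ℕ → ℕ) (he : ∀ s, e s ≤ 1) (he' : ∀ s, e' s ≤ 1)
    (h : ∑ s ∈ Finset.range i, e s * 2 ^ s = ∑ s ∈ Finset.range i, e' s * 2 ^ s) :
    ∀ s < i, e s = e' s := by
  induction i generalizing e e' with
  | zero => omega
  | succ i ih =>
    have key : ∀ f : ℕ → ℕ, ∑ s ∈ Finset.range (i + 1), f s * 2 ^ s =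
        f 0 + 2 * ∑ s ∈ Finset.range i, f (s + 1) * 2 ^ s := by
      intro f
      rw [Finset.sum_range_succ' (fun s => f s * 2 ^ s) i, Finset.mul_sum]
      simp only [pow_zero, mul_one]
      rw [add_comm]
      congr 1
      apply Finset.sum_congr rfl
      intro s _
      rw [pow_succ]
      ring
    rw [key e, key e'] at h
    have h0 : e 0 = e' 0 ∧ ∑ s ∈ Finset.range i, e (s + 1) * 2 ^ s =
        ∑ s ∈ Finset.range i, e' (s + 1) * 2 ^ s := by
      have := he 0
      have := he' 0
      omega
    intro s hs
    rcases Nat.eq_zero_or_pos s with rfl | hpos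
    · exact h0.1
    · obtain ⟨s', rfl⟩ : ∃ s', s = s' + 1 := ⟨s - 1, by omega⟩
      exact ih (fun u => e (u + 1)) (fun u => e' (u + 1)) (fun u => he _) (fun u => he' _)
        h0.2 s' (by omega)

lemma Dg_inj_digits {N N' i : ℕ} (h : Dg N i = Dg N' i) :
    ∀ t < i, dig (N + t) = dig (N' + t) := by
  rw [Dg_reflect, Dg_reflect] at h
  have key := bits_sum_inj _ _ (fun s => dig_le_one (N + (i - 1 - s)))
    (fun s => dig_le_one (N' + (i - 1 - s))) h
  intro t ht
  have := key (i - 1 - t) (by omega)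
  have h2 : i - 1 - (i - 1 - t) = t := by omega
  rwa [h2] at this

lemma valA_split (N i : ℕ) : valA N = (Dg N i : ℝ) / 2 ^ i + valA (N + i) / 2 ^ i := by
  have hkey := Summable.sum_add_tsum_nat_add (f := fun t => (dig (N + t) : ℝ) / 2 ^ (t + 1)) i
    (summable_dig N)
  rw [valA, ← hkey]
  congr 1
  · rw [Dg]
    push_cast
    rw [Finset.sum_div]
    apply Finset.sum_congr rfl
    intro t ht
    simp only [Finset.mem_range] at ht
    have h2 : (2:ℝ) ^ i = 2 ^ (t + 1) * 2 ^ (i - 1 - t) := by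
      rw [← pow_add]; congr 1; omega
    rw [h2]
    field_simp
  · rw [valA, ← tsum_div_const]
    apply tsum_congr
    intro s
    show (dig (N + (s + i)) : ℝ) / 2 ^ (s + i + 1) = _
    have h1 : N + (s + i) = N + i + s := by ring
    rw [h1]
    have h2 : (2:ℝ) ^ (s + i + 1) = 2 ^ (s + 1) * 2 ^ i := by
      rw [← pow_add]; congr 1; omega
    rw [h2, div_div]

lemma interval_iff {N i c : ℕ} (hc : c < 2 ^ i) :
    valA N ∈ Set.Ico ((c : ℝ) / 2 ^ i) (((c : ℝ) + 1) / 2 ^ i) ↔ Dg N i = c := by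
  have hsplit := valA_split N i
  set D := Dg N i with hD
  set ε := valA (N + i) with hε
  have hε0 : 0 ≤ ε := valA_nonneg _
  have hε1 : ε < 1 := valA_lt_one _
  have hP : (0:ℝ) < 2 ^ i := by positivity
  have hform : valA N = ((D : ℝ) + ε) / 2 ^ i := by
    rw [hsplit, add_div]
  rw [hform]
  constructor
  · rintro ⟨h1, h2⟩
    rw [div_le_div_iff_of_pos_right hP] at h1
    rw [div_lt_div_iff_of_pos_right hP] at h2
    have hc1 : (c : ℝ) < (D : ℝ) + 1 := by linarith
    have hc2 : (D : ℝ) < (c : ℝ) + 1 := by linarith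
    have : c < D + 1 := by exact_mod_cast hc1
    have : D < c + 1 := by exact_mod_cast hc2
    omega
  · rintro rfl
    constructor
    · rw [div_le_div_iff_of_pos_right hP]
      linarith
    · rw [div_lt_div_iff_of_pos_right hP]
      linarith


lemma bit_low {i j B r : ℕ} (hj : j < i) (hr : r < 2 ^ i) :
    (B * 2 ^ i + r) / 2 ^ j % 2 = r / 2 ^ j % 2 := by
  have e1 : B * 2 ^ i + r = r + B * 2 ^ (i - j - 1) * 2 * 2 ^ j := by
    have h2 : 2 ^ i = 2 ^ (i - j - 1) * 2 * 2 ^ j := by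
      rw [mul_assoc, ← pow_succ', ← pow_add]
      congr 1
      omega
    rw [h2]
    ring
  rw [e1, Nat.add_mul_div_right _ _ (show (0:ℕ) < 2 ^ j by positivity),
    Nat.add_mul_mod_self_right]

lemma bit_high {i j B r : ℕ} (hij : i ≤ j) (hr : r < 2 ^ i) :
    (B * 2 ^ i + r) / 2 ^ j % 2 = B / 2 ^ (j - i) % 2 := by
  have e2 : (2:ℕ) ^ j = 2 ^ i * 2 ^ (j - i) := by
    rw [← pow_add]; congr 1; omega
  rw [e2, ← Nat.div_div_eq_div_mul]
  congr 2
  rw [mul_comm, Nat.mul_add_div (by positivity), Nat.div_eq_of_lt hr]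
  omega

lemma cast_le_one_inj {a b : ℕ} (ha : a ≤ 1) (hb : b ≤ 1) (h : (a : ZMod 2) = b) : a = b := by
  interval_cases a <;> interval_cases b <;> simp_all

def bitv (i : ℕ) (r : ℕ) : Fin i → ZMod 2 := fun j => ((r / 2 ^ (j : ℕ) % 2 : ℕ) : ZMod 2)

def Mmat (i k : ℕ) : Matrix (Fin i) (Fin i) (ZMod 2) :=
  fun t j => ((k + (t : ℕ) + (j : ℕ)).choose (j : ℕ) : ZMod 2)

def Amat (i : ℕ) : Matrix (Fin i) (Fin i) (ZMod 2) :=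
  fun t l => ((t : ℕ).choose (l : ℕ) : ZMod 2)

def Bmat (i k : ℕ) : Matrix (Fin i) (Fin i) (ZMod 2) :=
  fun l j => if (l : ℕ) ≤ (j : ℕ) then ((k + (j : ℕ)).choose ((j : ℕ) - (l : ℕ)) : ZMod 2) else 0

noncomputable def Cvec (m i k B : ℕ) : Fin i → ZMod 2 :=
  fun t => ∑ j ∈ Finset.Ico i (2 ^ m),
    ((k + (t : ℕ) + j).choose j : ZMod 2) * ((B / 2 ^ (j - i) % 2 : ℕ) : ZMod 2)

lemma levinD_linear {m i k B r : ℕ} (hi : i ≤ 2 ^ m) (hr : r < 2 ^ i) (t : Fin i) :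
    ((levinD m (k + (t : ℕ)) (B * 2 ^ i + r) : ℕ) : ZMod 2) =
      (Mmat i k).mulVec (bitv i r) t + Cvec m i k B t := by
  rw [levinD, ZMod.natCast_mod, Nat.cast_sum]
  have hterm : ∀ j ∈ Finset.range (2 ^ m),
      (((k + (t : ℕ) + j).choose j % 2 * ((B * 2 ^ i + r) / 2 ^ j % 2) : ℕ) : ZMod 2) =
      ((k + (t : ℕ) + j).choose j : ZMod 2) * (((B * 2 ^ i + r) / 2 ^ j % 2 : ℕ) : ZMod 2) := by
    intro j _
    rw [Nat.cast_mul, ZMod.natCast_mod]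
  rw [Finset.sum_congr rfl hterm]
  rw [Finset.range_eq_Ico, ← Finset.sum_Ico_consecutive _ (Nat.zero_le i) hi]
  congr 1
  · rw [← Finset.range_eq_Ico]
    have h1 : (Mmat i k).mulVec (bitv i r) t =
        ∑ j ∈ Finset.range i,
          ((k + (t : ℕ) + j).choose j : ZMod 2) * ((r / 2 ^ j % 2 : ℕ) : ZMod 2) := by
      rw [Matrix.mulVec, dotProduct]
      exact Fin.sum_univ_eq_sum_range
        (fun j => ((k + (t : ℕ) + j).choose j : ZMod 2) * ((r / 2 ^ j % 2 : ℕ) : ZMod 2)) i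
    rw [h1]
    apply Finset.sum_congr rfl
    intro j hj
    simp only [Finset.mem_range] at hj
    rw [bit_low hj hr]
  · rw [Cvec]
    apply Finset.sum_congr rfl
    intro j hj
    simp only [Finset.mem_Ico] at hj
    rw [bit_high hj.1 hr]


lemma M_factor (i k : ℕ) : Mmat i k = Amat i * Bmat i k := by
  ext t j
  rw [Matrix.mul_apply]
  have hsum : ∑ l : Fin i, Amat i t l * Bmat i k l j =
      ∑ l ∈ Finset.range i, ((t : ℕ).choose l : ZMod 2) *
        (if l ≤ (j : ℕ) then ((k + (j : ℕ)).choose ((j : ℕ) - l) : ZMod 2) else 0) := by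
    exact Fin.sum_univ_eq_sum_range
      (fun l => ((t : ℕ).choose l : ZMod 2) *
        (if l ≤ (j : ℕ) then ((k + (j : ℕ)).choose ((j : ℕ) - l) : ZMod 2) else 0)) i
  rw [hsum]
  have van : (k + (t : ℕ) + (j : ℕ)).choose (j : ℕ) =
      ∑ l ∈ Finset.range ((j : ℕ) + 1), (t : ℕ).choose l * (k + (j : ℕ)).choose ((j : ℕ) - l) := by
    have h := Nat.add_choose_eq (t : ℕ) (k + (j : ℕ)) (j : ℕ)
    rw [Finset.Nat.sum_antidiagonal_eq_sum_range_succ_mk] at h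
    rw [show k + (t : ℕ) + (j : ℕ) = (t : ℕ) + (k + (j : ℕ)) by ring]
    exact h
  show ((k + (t : ℕ) + (j : ℕ)).choose (j : ℕ) : ZMod 2) = _
  rw [van, Nat.cast_sum]
  simp only [mul_ite, mul_zero]
  rw [← Finset.sum_filter]
  have hfilter : (Finset.range i).filter (fun l => l ≤ (j : ℕ)) = Finset.range ((j : ℕ) + 1) := by
    ext l
    simp only [Finset.mem_filter, Finset.mem_range]
    have := j.isLt
    omega
  rw [hfilter]
  apply Finset.sum_congr rfl
  intro l _
  rw [Nat.cast_mul]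


lemma Amat_det (i : ℕ) : (Amat i).det = 1 := by
  have h : (Amat i).BlockTriangular OrderDual.toDual := by
    intro t l h
    simp only [OrderDual.toDual_lt_toDual] at h
    show ((t : ℕ).choose (l : ℕ) : ZMod 2) = 0
    rw [Nat.choose_eq_zero_of_lt (by exact_mod_cast h)]
    simp
  rw [Matrix.det_of_lowerTriangular _ h]
  apply Finset.prod_eq_one
  intro t _
  show ((t : ℕ).choose (t : ℕ) : ZMod 2) = 1
  rw [Nat.choose_self]
  simp

lemma Bmat_det (i k : ℕ) : (Bmat i k).det = 1 := by
  have h : (Bmat i k).BlockTriangular id := by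
    intro l j h
    simp only [id_eq] at h
    show (if (l : ℕ) ≤ (j : ℕ) then _ else 0) = 0
    rw [if_neg]
    exact fun hle => absurd (Fin.le_def.mpr hle) (not_le.mpr h)
  rw [Matrix.det_of_upperTriangular h]
  apply Finset.prod_eq_one
  intro j _
  show (if (j : ℕ) ≤ (j : ℕ) then ((k + (j : ℕ)).choose ((j : ℕ) - (j : ℕ)) : ZMod 2) else 0) = 1
  rw [if_pos le_rfl, Nat.sub_self, Nat.choose_zero_right]
  simp

lemma bitv_inj {i r r' : ℕ} (hr : r < 2 ^ i) (hr' : r' < 2 ^ i) (h : bitv i r = bitv i r') :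
    r = r' := by
  apply Nat.eq_of_testBit_eq
  intro j
  rcases lt_or_ge j i with hj | hj
  · have h1 : ((r / 2 ^ j % 2 : ℕ) : ZMod 2) = ((r' / 2 ^ j % 2 : ℕ) : ZMod 2) :=
      congrFun h ⟨j, hj⟩
    have h2 : r / 2 ^ j % 2 = r' / 2 ^ j % 2 :=
      cast_le_one_inj (Nat.le_of_lt_succ (Nat.mod_lt _ two_pos))
        (Nat.le_of_lt_succ (Nat.mod_lt _ two_pos)) h1
    rw [Nat.testBit_eq_decide_div_mod_eq, Nat.testBit_eq_decide_div_mod_eq, h2]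
  · have hle : (2:ℕ) ^ i ≤ 2 ^ j := Nat.pow_le_pow_right (by norm_num) hj
    rw [Nat.testBit_lt_two_pow (lt_of_lt_of_le hr hle),
      Nat.testBit_lt_two_pow (lt_of_lt_of_le hr' hle)]

lemma digits_determine {m i k B r r' : ℕ} (hi : i ≤ 2 ^ m) (hr : r < 2 ^ i) (hr' : r' < 2 ^ i)
    (h : ∀ t : Fin i, levinD m (k + (t : ℕ)) (B * 2 ^ i + r) =
      levinD m (k + (t : ℕ)) (B * 2 ^ i + r')) : r = r' := by
  haveI : Fact (Nat.Prime 2) := ⟨Nat.prime_two⟩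
  have hmv : (Mmat i k).mulVec (bitv i r) = (Mmat i k).mulVec (bitv i r') := by
    funext t
    have h1 := levinD_linear (k := k) (B := B) hi hr t
    have h2 := levinD_linear (k := k) (B := B) hi hr' t
    have h3 : ((levinD m (k + (t : ℕ)) (B * 2 ^ i + r) : ℕ) : ZMod 2) =
        ((levinD m (k + (t : ℕ)) (B * 2 ^ i + r') : ℕ) : ZMod 2) := by rw [h t]
    rw [h1, h2] at h3
    exact add_right_cancel h3
  have hdet : (Mmat i k).det = 1 := by
    rw [M_factor, Matrix.det_mul, Amat_det, Bmat_det, one_mul]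
  haveI : Invertible (Mmat i k) :=
    (Mmat i k).invertibleOfIsUnitDet (by rw [hdet]; exact isUnit_one)
  exact bitv_inj hr hr' (Matrix.mulVec_injective_of_invertible (Mmat i k) hmv)

end LevinProof

/-- For `m ≥ 1`, `0 ≤ i < 2^m`, `0 ≤ k < 2^m` with `k + i ≤ 2^m`, `0 ≤ B < 2^{2^m−i}`
and `0 ≤ c < 2^i`, there is exactly one `n` with `B·2^i ≤ n < B·2^i + 2^i` such that
`{2^{n_m + 2^m n + k} α} ∈ [c/2^i, (c+1)/2^i)`. -/


theorem levin_unique_point (m : ℕ) (hm : 1 ≤ m) (i k : ℕ) (hi : i < 2 ^ m)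
    (hk : k < 2 ^ m) (hki : k + i ≤ 2 ^ m) (B : ℕ) (hB : B < 2 ^ (2 ^ m - i))
    (c : ℕ) (hc : c < 2 ^ i) :
    ∃! n : ℕ, (B * 2 ^ i ≤ n ∧ n < B * 2 ^ i + 2 ^ i) ∧
      Int.fract (2 ^ (levinN m + 2 ^ m * n + k) * levinAlpha) ∈
        Set.Ico ((c : ℝ) / 2 ^ i) (((c : ℝ) + 1) / 2 ^ i) := by
  classical
  have hi' : i ≤ 2 ^ m := le_of_lt hi
  have hpow : 2 ^ (2 ^ m - i) * 2 ^ i = 2 ^ 2 ^ m := by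
    rw [← pow_add]; congr 1; omega
  have hnlt : ∀ r, r < 2 ^ i → B * 2 ^ i + r < 2 ^ 2 ^ m := by
    intro r hr
    have h1 : (B + 1) * 2 ^ i ≤ 2 ^ (2 ^ m - i) * 2 ^ i :=
      Nat.mul_le_mul_right _ (by omega)
    have h2 : B * 2 ^ i + r < (B + 1) * 2 ^ i := by
      rw [add_mul, one_mul]; omega
    omega
  have hdigat : ∀ n, n < 2 ^ 2 ^ m → ∀ t, t < i →
      LevinProof.dig (levinN m + 2 ^ m * n + k + t) = levinD m (k + t) n := by
    intro n hn t ht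
    have h1 : levinN m + 2 ^ m * n + k + t = levinN m + (2 ^ m * n + (k + t)) := by ring
    rw [h1, LevinProof.dig_eq hm hn (by omega)]
  have hcond : ∀ n : ℕ,
      (Int.fract (2 ^ (levinN m + 2 ^ m * n + k) * levinAlpha) ∈
        Set.Ico ((c : ℝ) / 2 ^ i) (((c : ℝ) + 1) / 2 ^ i) ↔
        LevinProof.Dg (levinN m + 2 ^ m * n + k) i = c) := by
    intro n
    rw [LevinProof.valA_succ]
    exact LevinProof.interval_iff hc
  have hinj : ∀ r r', r < 2 ^ i → r' < 2 ^ i →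
      LevinProof.Dg (levinN m + 2 ^ m * (B * 2 ^ i + r) + k) i =
      LevinProof.Dg (levinN m + 2 ^ m * (B * 2 ^ i + r') + k) i → r = r' := by
    intro r r' hr hr' heq
    apply LevinProof.digits_determine (m := m) (k := k) (B := B) hi' hr hr'
    intro t
    have h1 := LevinProof.Dg_inj_digits heq (t : ℕ) t.isLt
    rw [hdigat (B * 2 ^ i + r) (hnlt r hr) (t : ℕ) t.isLt,
      hdigat (B * 2 ^ i + r') (hnlt r' hr') (t : ℕ) t.isLt] at h1
    exact h1
  set f : ℕ → ℕ := fun r => LevinProof.Dg (levinN m + 2 ^ m * (B * 2 ^ i + r) + k) i with hf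
  have hmaps : ∀ r ∈ Finset.range (2 ^ i), f r ∈ Finset.range (2 ^ i) :=
    fun r _ => Finset.mem_range.mpr (LevinProof.Dg_lt _ _)
  have himage : (Finset.range (2 ^ i)).image f = Finset.range (2 ^ i) := by
    apply Finset.eq_of_subset_of_card_le
    · intro x hx
      obtain ⟨r, hr, rfl⟩ := Finset.mem_image.mp hx
      exact hmaps r hr
    · rw [Finset.card_image_of_injOn
        (fun r hr r' hr' h =>
          hinj r r' (Finset.mem_range.mp hr) (Finset.mem_range.mp hr') h)]
  have hcmem : c ∈ (Finset.range (2 ^ i)).image f := by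
    rw [himage]; exact Finset.mem_range.mpr hc
  obtain ⟨r₀, hr₀mem, hfr₀⟩ := Finset.mem_image.mp hcmem
  have hr₀ : r₀ < 2 ^ i := Finset.mem_range.mp hr₀mem
  refine ⟨B * 2 ^ i + r₀, ⟨⟨by omega, by omega⟩, ?_⟩, ?_⟩
  · exact (hcond _).mpr hfr₀
  · rintro n' ⟨⟨hlb, hub⟩, hmem⟩
    have hn' : n' = B * 2 ^ i + (n' - B * 2 ^ i) := by omega
    set r' := n' - B * 2 ^ i with hr'def
    have hr' : r' < 2 ^ i := by omega
    have h1 := (hcond n').mp hmem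
    rw [hn'] at h1
    have := hinj r' r₀ hr' hr₀ (by rw [h1]; exact hfr₀.symm)
    omega
end
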